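/- arXiv:2405.04882 — 3 statements merged into one kernel-verified Lean document; each statement's English description precedes it below -/
import Mathlib

section
/- Let n ≥ 1 and let k, l be integers with 1 ≤ l < k ≤ n. Then for every λ ∈ Γ_k one has k(n−l+1)σ_k(λ)σ_{l−1}(λ) ≤ l(n−k+1)σ_{k−1}(λ)σ_l(λ). -/
/-- The `m`-th elementary symmetric polynomial of `lam : Fin n → ℝ`. -/
noncomputable def esymm (n m : ℕ) (lam : Fin n → ℝ) : ℝ :=
  ∑ s ∈ Finset.univ.powersetCard m, ∏ i ∈ s, lam i

/-- `σ_{l-1}` with the convention `σ_{-1} = 0`. -/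
noncomputable def esymmPred (n l : ℕ) (lam : Fin n → ℝ) : ℝ :=
  if l = 0 then 0 else esymm n (l - 1) lam

/-- The Gårding cone `Γ_k`. -/
def GammaK (n k : ℕ) : Set (Fin n → ℝ) :=
  {lam | ∀ j, 1 ≤ j → j ≤ k → 0 < esymm n j lam}

/-- `G^{jj} = ∂(σ_k/σ_l)/∂λ_j`. -/
noncomputable def Gjj (n k l : ℕ) (lam : Fin n → ℝ) (j : Fin n) : ℝ :=
  (esymm n (k - 1) (Function.update lam j 0) * esymm n l lam
      - esymm n k lam * esymmPred n l (Function.update lam j 0)) / (esymm n l lam) ^ 2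

/-- `F^{ii} = θ Σ_j G^{jj} − μ G^{ii}`. -/
noncomputable def Fii (n k l : ℕ) (θ μ : ℝ) (lam : Fin n → ℝ) (i : Fin n) : ℝ :=
  θ * ∑ j, Gjj n k l lam j - μ * Gjj n k l lam i

/-- Gradient vector of `u` at `x`. -/
noncomputable def pgrad (n : ℕ) (u : (Fin n → ℝ) → ℝ) (x : Fin n → ℝ) : Fin n → ℝ :=
  fun i => fderiv ℝ u x (Pi.single i 1)

/-- Hessian matrix of `u` at `x`. -/
noncomputable def hessMat (n : ℕ) (u : (Fin n → ℝ) → ℝ) (x : Fin n → ℝ) :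
    Matrix (Fin n) (Fin n) ℝ :=
  Matrix.of fun i j => iteratedFDeriv ℝ 2 u x ![Pi.single i 1, Pi.single j 1]

/-- Hessian matrix of `u` at `x` computed with derivatives within `s`. -/
noncomputable def hessMatWithin (n : ℕ) (u : (Fin n → ℝ) → ℝ) (s : Set (Fin n → ℝ))
    (x : Fin n → ℝ) : Matrix (Fin n) (Fin n) ℝ :=
  Matrix.of fun i j => iteratedFDerivWithin ℝ 2 u s x ![Pi.single i 1, Pi.single j 1]

/-- `η[u] = (Δu) I − D²u`. -/
noncomputable def etaMat (n : ℕ) (u : (Fin n → ℝ) → ℝ) (x : Fin n → ℝ) :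
    Matrix (Fin n) (Fin n) ℝ :=
  Matrix.trace (hessMat n u x) • (1 : Matrix (Fin n) (Fin n) ℝ) - hessMat n u x

/-- Euclidean ball in `Fin n → ℝ`. -/
def EBall (n : ℕ) (c : Fin n → ℝ) (r : ℝ) : Set (Fin n → ℝ) :=
  {x | ∑ i, (x i - c i) ^ 2 < r ^ 2}

/-- `W = √(1+|Du|²)`. -/
noncomputable def Wgraph (n : ℕ) (u : (Fin n → ℝ) → ℝ) (x : Fin n → ℝ) : ℝ :=
  Real.sqrt (1 + ∑ i, (pgrad n u x i) ^ 2)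

/-- Matrix similar to `A = W⁻¹ g^{-1/2} D²u g^{-1/2}`, namely `W⁻¹ g⁻¹ D²u`. -/
noncomputable def shapeMat (n : ℕ) (u : (Fin n → ℝ) → ℝ) (x : Fin n → ℝ) :
    Matrix (Fin n) (Fin n) ℝ :=
  (Wgraph n u x)⁻¹ •
    ((1 + Matrix.vecMulVec (pgrad n u x) (pgrad n u x))⁻¹ * hessMat n u x)


section NewtonAuxSection

namespace NewtonAux

open Multiset Polynomial

lemma esymm_zero' (s : Multiset ℝ) : s.esymm 0 = 1 := by
  simp [Multiset.esymm, Multiset.powersetCard_zero_left]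

lemma esymm_of_card_lt {s : Multiset ℝ} {m : ℕ} (h : Multiset.card s < m) :
    s.esymm m = 0 := by
  simp [Multiset.esymm, Multiset.powersetCard_eq_empty _ h]

lemma esymm_cons (a : ℝ) (s : Multiset ℝ) (m : ℕ) :
    (a ::ₘ s).esymm (m + 1) = s.esymm (m + 1) + a * s.esymm m := by
  simp only [Multiset.esymm, Multiset.powersetCard_cons, Multiset.map_add, Multiset.sum_add,
    Multiset.map_map, Function.comp_def, Multiset.prod_cons]
  rw [Multiset.sum_map_mul_left]

lemma esymm_one' (s : Multiset ℝ) : s.esymm 1 = s.sum := by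
  simp [Multiset.esymm, Multiset.powersetCard_one, Multiset.map_map, Function.comp_def]

lemma esymm_card (s : Multiset ℝ) : s.esymm (Multiset.card s) = s.prod := by
  induction s using Multiset.induction_on with
  | empty => simp [esymm_zero']
  | cons a s ih =>
      rw [Multiset.card_cons, esymm_cons, esymm_of_card_lt (by simp), ih, Multiset.prod_cons]
      ring


lemma sq_sum_eq (s : Multiset ℝ) :
    s.sum ^ 2 = (s.map (fun x => x ^ 2)).sum + 2 * s.esymm 2 := by
  induction s using Multiset.induction_on with
  | empty => simp [esymm_of_card_lt]; exact esymm_of_card_lt (by simp)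
  | cons a s ih =>
      rw [Multiset.sum_cons, Multiset.map_cons, Multiset.sum_cons,
        show (2 : ℕ) = 1 + 1 from rfl, esymm_cons, esymm_one']
      ring_nf
      ring_nf at ih
      linarith [ih]

lemma pt_nonneg (a : ℝ) (s : Multiset ℝ) :
    0 ≤ (Multiset.card s : ℝ) * a ^ 2 - 2 * a * s.sum + (s.map (fun x => x ^ 2)).sum := by
  induction s using Multiset.induction_on with
  | empty => simp
  | cons b s ih =>
      rw [Multiset.card_cons, Multiset.sum_cons, Multiset.map_cons, Multiset.sum_cons]
      push_cast
      nlinarith [ih, sq_nonneg (a - b)]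

lemma m1 (s : Multiset ℝ) :
    0 ≤ ((Multiset.card s : ℝ) - 1) * s.sum ^ 2 - 2 * (Multiset.card s : ℝ) * s.esymm 2 := by
  induction s using Multiset.induction_on with
  | empty => simp [esymm_of_card_lt]
  | cons a s ih =>
      have hsq := sq_sum_eq s
      have hpt := pt_nonneg a s
      rw [Multiset.card_cons, Multiset.sum_cons, show (2 : ℕ) = 1 + 1 from rfl, esymm_cons,
        esymm_one']
      push_cast
      nlinarith [ih, hpt, hsq]


lemma recip (s : Multiset ℝ) (hs : ∀ x ∈ s, x ≠ 0) :
    ∀ j ≤ Multiset.card s,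
      (s.map (fun x => x⁻¹)).esymm j * s.prod = s.esymm (Multiset.card s - j) := by
  induction s using Multiset.induction_on with
  | empty =>
      intro j hj
      simp only [Multiset.card_zero, Nat.le_zero] at hj
      subst hj
      simp [esymm_zero']
  | cons a s ih =>
      intro j hj
      have ha : a ≠ 0 := hs a (Multiset.mem_cons_self a s)
      have hs' : ∀ x ∈ s, x ≠ 0 := fun x hx => hs x (Multiset.mem_cons_of_mem hx)
      rw [Multiset.map_cons, Multiset.prod_cons]
      cases j with
      | zero =>
          rw [esymm_zero', Nat.sub_zero, esymm_card, Multiset.prod_cons]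
          ring
      | succ i =>
          rw [Multiset.card_cons] at hj ⊢
          have hi : i ≤ Multiset.card s := by omega
          rw [esymm_cons]
          rcases Nat.lt_or_ge i (Multiset.card s) with hilt | hige
          · have h1 : i + 1 ≤ Multiset.card s := by omega
            have e1 := ih hs' (i + 1) h1
            have e2 := ih hs' i hi
            have hc : Multiset.card s + 1 - (i + 1) = (Multiset.card s - (i + 1)) + 1 := by omega
            rw [hc, esymm_cons]
            have hc2 : Multiset.card s - (i + 1) + 1 = Multiset.card s - i := by omega
            calc ((s.map fun x => x⁻¹).esymm (i + 1) + a⁻¹ * (s.map fun x => x⁻¹).esymm i) *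
                  (a * s.prod)
                = a * ((s.map fun x => x⁻¹).esymm (i + 1) * s.prod)
                  + (s.map fun x => x⁻¹).esymm i * s.prod := by field_simp
              _ = a * s.esymm (Multiset.card s - (i + 1)) + s.esymm (Multiset.card s - i) := by
                  rw [e1, e2]
              _ = _ := by rw [hc2]; ring
          · have hieq : i = Multiset.card s := le_antisymm hi hige
            subst hieq
            have e2 := ih hs' (Multiset.card s) le_rfl
            rw [Nat.sub_self, esymm_zero'] at e2
            rw [esymm_of_card_lt (by simp)]
            have hc : Multiset.card s + 1 - (Multiset.card s + 1) = 0 := by omega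
            rw [hc, esymm_zero']
            calc (0 + a⁻¹ * (s.map fun x => x⁻¹).esymm (Multiset.card s)) * (a * s.prod)
                = (s.map fun x => x⁻¹).esymm (Multiset.card s) * s.prod := by field_simp; ring
              _ = 1 := e2

lemma mtop {s : Multiset ℝ} {n : ℕ} (hcard : Multiset.card s = n) (hn : 2 ≤ n) :
    2 * (n : ℝ) * (s.esymm (n - 2) * s.esymm n) ≤ ((n : ℝ) - 1) * s.esymm (n - 1) ^ 2 := by
  have hprod : s.esymm n = s.prod := by rw [← hcard, esymm_card]
  by_cases hz : ∀ x ∈ s, x ≠ 0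
  · have hm1 := m1 (s.map (fun x => x⁻¹))
    rw [Multiset.card_map, hcard, ← esymm_one'] at hm1
    have e1 := recip s hz 1 (by omega)
    have e2 := recip s hz 2 (by omega)
    rw [hcard] at e1 e2
    have key : 0 ≤ (((n : ℝ) - 1) * ((s.map (fun x => x⁻¹)).esymm 1) ^ 2
        - 2 * (n : ℝ) * (s.map (fun x => x⁻¹)).esymm 2) * s.prod ^ 2 :=
      mul_nonneg hm1 (sq_nonneg _)
    have e1' : ((s.map (fun x => x⁻¹)).esymm 1) ^ 2 * s.prod ^ 2 = s.esymm (n - 1) ^ 2 := by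
      rw [← mul_pow, e1]
    have e2' : (s.map (fun x => x⁻¹)).esymm 2 * s.prod ^ 2 = s.esymm (n - 2) * s.prod := by
      rw [sq, ← mul_assoc, e2]
    rw [hprod]
    nlinarith [key, e1', e2']
  · push_neg at hz
    obtain ⟨x, hx, rfl⟩ := hz
    rw [hprod, Multiset.prod_eq_zero hx]
    have h2 : (2:ℝ) ≤ (n:ℝ) := by exact_mod_cast hn
    nlinarith [sq_nonneg (s.esymm (n-1))]


lemma deriv_step {s : Multiset ℝ} {n : ℕ} (hcard : Multiset.card s = n) (hn : 1 ≤ n) :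
    ∃ t : Multiset ℝ, Multiset.card t = n - 1 ∧
      ∀ m ≤ n - 1, (n : ℝ) * t.esymm m = ((n - m : ℕ) : ℝ) * s.esymm m := by
  set p : ℝ[X] := (s.map (fun a => X - C a)).prod with hp
  have hmonic : p.Monic := monic_multiset_prod_of_monic _ _ fun a _ => monic_X_sub_C a
  have hdeg : p.natDegree = n := by
    rw [hp, natDegree_multiset_prod_X_sub_C_eq_card, hcard]
  have hroots : p.roots = s := roots_multiset_prod_X_sub_C s
  set q : ℝ[X] := derivative p with hq
  have hqdegle : q.natDegree ≤ n - 1 := by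
    have := natDegree_derivative_le p
    rw [hdeg] at this
    exact this
  have hcr : n - 1 ≤ Multiset.card q.roots := by
    have h1 := p.card_roots_le_derivative
    rw [hroots, hcard, ← hq] at h1
    omega
  have hcr2 : Multiset.card q.roots ≤ q.natDegree := q.card_roots'
  have hqdeg : q.natDegree = n - 1 := by omega
  have hqroots : Multiset.card q.roots = q.natDegree := by omega
  refine ⟨q.roots, by omega, fun m hm => ?_⟩
  -- leading coefficient of q
  have hlc : q.leadingCoeff = n := by
    rw [Polynomial.leadingCoeff, hqdeg]
    have h1 : q.coeff (n - 1) = p.coeff (n - 1 + 1) * ((n - 1 : ℕ) + 1 : ℝ) := by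
      rw [hq, coeff_derivative]
    have h2 : n - 1 + 1 = n := by omega
    have h3 : p.coeff n = 1 := by rw [← hdeg]; exact hmonic.coeff_natDegree
    rw [h1, h2, h3, Nat.cast_sub hn]
    push_cast
    ring
  -- Vieta for q
  have hvq := Polynomial.coeff_eq_esymm_roots_of_card hqroots
    (show (n - 1) - m ≤ q.natDegree by omega)
  rw [hqdeg] at hvq
  have hmq : n - 1 - (n - 1 - m) = m := by omega
  rw [hmq, hlc] at hvq
  -- Vieta for p
  have hvp := Polynomial.coeff_eq_esymm_roots_of_card
    (show Multiset.card p.roots = p.natDegree by rw [hroots, hcard, hdeg])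
    (show n - m ≤ p.natDegree by omega)
  rw [hdeg, hroots] at hvp
  have hmp : n - (n - m) = m := by omega
  rw [hmp, hmonic.leadingCoeff] at hvp
  -- relate coefficients of q and p
  have hcd : q.coeff (n - 1 - m) = p.coeff (n - 1 - m + 1) * ((n - 1 - m : ℕ) + 1 : ℝ) := by
    rw [hq, coeff_derivative]
  have hidx : n - 1 - m + 1 = n - m := by omega
  rw [hidx, hvp] at hcd
  rw [hvq] at hcd
  -- hcd : n * (-1)^m * esymm m q.roots = 1 * (-1)^m * esymm m s * (n-1-m+1)
  have hsign : ((-1 : ℝ) ^ m) ^ 2 = 1 := by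
    rw [← pow_mul, mul_comm, pow_mul]; simp
  have hcast : ((n - 1 - m : ℕ) : ℝ) + 1 = ((n - m : ℕ) : ℝ) := by
    have h5 : n - 1 - m + 1 = n - m := by omega
    exact_mod_cast congrArg (Nat.cast : ℕ → ℝ) h5
  linear_combination ((-1:ℝ) ^ m) * hcd
    + (s.esymm m * (((n - 1 - m : ℕ) : ℝ) + 1) - (n : ℝ) * q.roots.esymm m) * hsign
    + s.esymm m * hcast


lemma choose_cast_id {n : ℕ} (k : ℕ) (hn : 1 ≤ n) :
    (((n - 1).choose k : ℝ)) * n = (n.choose k : ℝ) * ((n - k : ℕ) : ℝ) := by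
  have h := Nat.choose_mul_succ_eq (n - 1) k
  have h2 : n - 1 + 1 = n := by omega
  rw [h2] at h
  exact_mod_cast congrArg (Nat.cast : ℕ → ℝ) h

theorem newton : ∀ (n : ℕ) (s : Multiset ℝ), Multiset.card s = n → ∀ m : ℕ, 1 ≤ m → m + 1 ≤ n →
    (n.choose m : ℝ) ^ 2 * (s.esymm (m - 1) * s.esymm (m + 1))
      ≤ (n.choose (m - 1) : ℝ) * (n.choose (m + 1) : ℝ) * s.esymm m ^ 2 := by
  intro n
  induction n using Nat.strong_induction_on with
  | _ n ih =>
    intro s hcard m hm hmn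
    rcases eq_or_lt_of_le hmn with heq | hlt
    · -- top case : m + 1 = n
      have hn2 : 2 ≤ n := by omega
      have hmt := mtop hcard hn2
      have hm1 : m - 1 = n - 2 := by omega
      have hp1 : m + 1 = n := heq
      have hm0 : m = n - 1 := by omega
      have hc1 : n.choose (n - 1) = n := by
        rw [Nat.choose_symm (by omega : 1 ≤ n), Nat.choose_one_right]
      have hc3 : (n.choose (n - 2) : ℝ) * 2 = (n : ℝ) * ((n : ℝ) - 1) := by
        have h := Nat.choose_succ_right_eq n (n - 2)
        have h2 : n - 2 + 1 = n - 1 := by omega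
        have h3 : n - (n - 2) = 2 := by omega
        rw [h2, h3, hc1] at h
        have h4 : ((n.choose (n - 2) : ℝ)) * 2 = (n : ℝ) * ((n - 1 : ℕ) : ℝ) := by
          exact_mod_cast congrArg (Nat.cast : ℕ → ℝ) h.symm
        rw [h4, Nat.cast_sub (by omega : 1 ≤ n)]
        push_cast; ring
      rw [hm1, hp1, hm0, hc1, Nat.choose_self]
      have hn0 : (0:ℝ) ≤ (n:ℝ) := by positivity
      have hmul := mul_le_mul_of_nonneg_left hmt hn0
      have hB : 2 * ((n.choose (n - 2) : ℝ) * s.esymm (n - 1) ^ 2)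
          = ((n:ℝ) * ((n:ℝ) - 1)) * s.esymm (n - 1) ^ 2 := by
        linear_combination s.esymm (n - 1) ^ 2 * hc3
      push_cast
      nlinarith [hmul, hB]
    · -- middle case : m + 1 < n
      have hn1 : 1 ≤ n := by omega
      obtain ⟨t, htc, hrel⟩ := deriv_step hcard hn1
      have IH := ih (n - 1) (by omega) t htc m hm (by omega)
      have h1 := hrel (m - 1) (by omega)
      have h0 := hrel m (by omega)
      have h2 := hrel (m + 1) (by omega)
      have hcm := choose_cast_id m hn1
      have hcm1 := choose_cast_id (m - 1) hn1
      have hcm2 := choose_cast_id (m + 1) hn1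
      set a : ℝ := ((n - m : ℕ) : ℝ) with ha
      set b : ℝ := ((n - (m - 1) : ℕ) : ℝ) with hb
      set c : ℝ := ((n - (m + 1) : ℕ) : ℝ) with hc
      have hapos : 0 < a := by rw [ha]; exact_mod_cast Nat.sub_pos_of_lt (by omega)
      have hbpos : 0 < b := by rw [hb]; exact_mod_cast Nat.sub_pos_of_lt (by omega)
      have hcpos : 0 < c := by rw [hc]; exact_mod_cast Nat.sub_pos_of_lt (by omega)
      have hfpos : (0:ℝ) < a ^ 2 * b * c := by positivity
      have e1 : ((((n-1).choose m : ℝ)) * n) * ((((n-1).choose m : ℝ)) * n)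
            * ((n : ℝ) * t.esymm (m - 1)) * ((n : ℝ) * t.esymm (m + 1))
          = ((n.choose m : ℝ) * a) * ((n.choose m : ℝ) * a)
            * (b * s.esymm (m - 1)) * (c * s.esymm (m + 1)) := by
        rw [hcm, h1, h2]
      have e2 : ((((n-1).choose (m-1) : ℝ)) * n) * ((((n-1).choose (m+1) : ℝ)) * n)
            * (((n : ℝ) * t.esymm m) * ((n : ℝ) * t.esymm m))
          = ((n.choose (m-1) : ℝ) * b) * ((n.choose (m+1) : ℝ) * c)
            * ((a * s.esymm m) * (a * s.esymm m)) := by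
        rw [hcm1, hcm2, h0]
      have E1 : (a ^ 2 * b * c) * ((n.choose m : ℝ) ^ 2 * (s.esymm (m-1) * s.esymm (m+1)))
          = (n:ℝ)^4 * (((n-1).choose m : ℝ) ^ 2 * (t.esymm (m-1) * t.esymm (m+1))) := by
        linear_combination -e1
      have E2 : (a ^ 2 * b * c) * ((n.choose (m-1) : ℝ) * (n.choose (m+1) : ℝ) * s.esymm m ^ 2)
          = (n:ℝ)^4 * (((n-1).choose (m-1) : ℝ) * ((n-1).choose (m+1) : ℝ) * t.esymm m ^ 2) := by
        linear_combination -e2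
      have key : (a ^ 2 * b * c) * ((n.choose m : ℝ) ^ 2 * (s.esymm (m-1) * s.esymm (m+1)))
          ≤ (a ^ 2 * b * c) *
            ((n.choose (m-1) : ℝ) * (n.choose (m+1) : ℝ) * s.esymm m ^ 2) := by
        rw [E1, E2]
        exact mul_le_mul_of_nonneg_left IH (by positivity)
      exact le_of_mul_le_mul_left key hfpos


lemma chain {n K : ℕ} {s : Multiset ℝ} (hcard : Multiset.card s = n) (hK : K ≤ n)
    (pos : ∀ j ≤ K, 0 < s.esymm j) :
    ∀ k l : ℕ, 1 ≤ l → l < k → k ≤ K →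
      (n.choose (k - 1) : ℝ) * (n.choose l : ℝ) * (s.esymm k * s.esymm (l - 1))
        ≤ (n.choose k : ℝ) * (n.choose (l - 1) : ℝ) * (s.esymm (k - 1) * s.esymm l) := by
  intro k
  induction k with
  | zero => omega
  | succ k ihk =>
    intro l hl hlk hkK
    rcases eq_or_lt_of_le (by omega : l + 1 ≤ k + 1) with heq | hlt
    · -- base : k + 1 = l + 1, i.e. k = l
      have hk : k = l := by omega
      subst hk
      have NT := newton n s hcard k hl (by omega)
      simp only [Nat.add_sub_cancel]
      nlinarith [NT]
    · -- step
      have hlk' : l < k := by omega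
      have IH := ihk l hl hlk' (by omega)
      have NT := newton n s hcard k (by omega) (by omega)
      simp only [Nat.add_sub_cancel]
      have posk1 : 0 < s.esymm (k - 1) := pos _ (by omega)
      have posk : 0 < s.esymm k := pos _ (by omega)
      have poskp : 0 < s.esymm (k + 1) := pos _ (by omega)
      have posl : 0 < s.esymm l := pos _ (by omega)
      have posl1 : 0 < s.esymm (l - 1) := pos _ (by omega)
      have hck : (0:ℝ) < (n.choose k : ℝ) := by
        exact_mod_cast Nat.choose_pos (by omega : k ≤ n)
      have hck1 : (0:ℝ) < (n.choose (k - 1) : ℝ) := by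
        exact_mod_cast Nat.choose_pos (by omega : k - 1 ≤ n)
      have key := mul_le_mul IH NT
        (by positivity)
        (by positivity)
      -- key : IH.lhs * NT.lhs ≤ IH.rhs * NT.rhs
      have F : (0:ℝ) < (n.choose (k-1) : ℝ) * (n.choose k : ℝ) * (s.esymm (k-1) * s.esymm k) :=
        by positivity
      refine le_of_mul_le_mul_left ?_ F
      calc ((n.choose (k-1) : ℝ) * (n.choose k : ℝ) * (s.esymm (k-1) * s.esymm k)) *
            ((n.choose k : ℝ) * (n.choose l : ℝ) * (s.esymm (k+1) * s.esymm (l-1)))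
          = ((n.choose (k-1) : ℝ) * (n.choose l : ℝ) * (s.esymm k * s.esymm (l-1))) *
            ((n.choose k : ℝ) ^ 2 * (s.esymm (k-1) * s.esymm (k+1))) := by ring
        _ ≤ ((n.choose k : ℝ) * (n.choose (l-1) : ℝ) * (s.esymm (k-1) * s.esymm l)) *
            ((n.choose (k-1) : ℝ) * (n.choose (k+1) : ℝ) * s.esymm k ^ 2) := key
        _ = ((n.choose (k-1) : ℝ) * (n.choose k : ℝ) * (s.esymm (k-1) * s.esymm k)) *
            ((n.choose (k+1) : ℝ) * (n.choose (l-1) : ℝ) * (s.esymm k * s.esymm l)) := by ring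


end NewtonAux

end NewtonAuxSection

theorem stmt1 (n k l : ℕ) (hn : 1 ≤ n) (hl : 1 ≤ l) (hlk : l < k) (hkn : k ≤ n)
    (lam : Fin n → ℝ) (hlam : lam ∈ GammaK n k) :
    (k : ℝ) * ((n : ℝ) - (l : ℝ) + 1) * esymm n k lam * esymm n (l - 1) lam
      ≤ (l : ℝ) * ((n : ℝ) - (k : ℝ) + 1) * esymm n (k - 1) lam * esymm n l lam := by
  classical
  set s : Multiset ℝ := Multiset.map lam Finset.univ.val with hs
  have hcard : Multiset.card s = n := by simp [hs]
  have hconv : ∀ m, esymm n m lam = s.esymm m := by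
    intro m
    rw [hs, Finset.esymm_map_val]
    rfl
  have pos : ∀ j ≤ k, 0 < s.esymm j := by
    intro j hj
    rcases Nat.eq_zero_or_pos j with rfl | hj0
    · rw [NewtonAux.esymm_zero']; norm_num
    · rw [← hconv]; exact hlam j hj0 hj
  have R := NewtonAux.chain hcard hkn pos k l hl hlk le_rfl
  -- choose identities
  have Ia : (n.choose k : ℝ) * k = (n.choose (k - 1) : ℝ) * ((n : ℝ) - k + 1) := by
    have h := Nat.choose_succ_right_eq n (k - 1)
    have h2 : k - 1 + 1 = k := by omega
    rw [h2] at h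
    have h3 : ((n.choose k : ℝ)) * k = (n.choose (k-1) : ℝ) * ((n - (k-1) : ℕ) : ℝ) := by
      exact_mod_cast congrArg (Nat.cast : ℕ → ℝ) h
    rw [h3, Nat.cast_sub (by omega : k - 1 ≤ n), Nat.cast_sub (by omega : 1 ≤ k)]
    push_cast
    ring
  have Ib : (n.choose l : ℝ) * l = (n.choose (l - 1) : ℝ) * ((n : ℝ) - l + 1) := by
    have h := Nat.choose_succ_right_eq n (l - 1)
    have h2 : l - 1 + 1 = l := by omega
    rw [h2] at h
    have h3 : ((n.choose l : ℝ)) * l = (n.choose (l-1) : ℝ) * ((n - (l-1) : ℕ) : ℝ) := by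
      exact_mod_cast congrArg (Nat.cast : ℕ → ℝ) h
    rw [h3, Nat.cast_sub (by omega : l - 1 ≤ n), Nat.cast_sub (by omega : 1 ≤ l)]
    push_cast
    ring
  have hkl : (0:ℝ) ≤ (k : ℝ) * l := by positivity
  have key := mul_le_mul_of_nonneg_left R hkl
  have hCpos : (0:ℝ) < (n.choose (k - 1) : ℝ) * (n.choose (l - 1) : ℝ) := by
    have := Nat.choose_pos (by omega : k - 1 ≤ n)
    have := Nat.choose_pos (by omega : l - 1 ≤ n)
    positivity
  rw [hconv k, hconv (l - 1), hconv (k - 1), hconv l]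
  refine le_of_mul_le_mul_left ?_ hCpos
  calc ((n.choose (k - 1) : ℝ) * (n.choose (l - 1) : ℝ)) *
        ((k : ℝ) * ((n : ℝ) - (l : ℝ) + 1) * s.esymm k * s.esymm (l - 1))
      = (k : ℝ) * (l : ℝ) *
        ((n.choose (k - 1) : ℝ) * (n.choose l : ℝ) * (s.esymm k * s.esymm (l - 1))) := by
        linear_combination (-(k:ℝ) * (n.choose (k-1) : ℝ) * (s.esymm k * s.esymm (l-1))) * Ib
    _ ≤ (k : ℝ) * (l : ℝ) *
        ((n.choose k : ℝ) * (n.choose (l - 1) : ℝ) * (s.esymm (k - 1) * s.esymm l)) := key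
    _ = ((n.choose (k - 1) : ℝ) * (n.choose (l - 1) : ℝ)) *
        ((l : ℝ) * ((n : ℝ) - (k : ℝ) + 1) * s.esymm (k - 1) * s.esymm l) := by
        linear_combination ((l:ℝ) * (n.choose (l-1) : ℝ) * (s.esymm (k-1) * s.esymm l)) * Ia
end

section
/- Let 1 ≤ k ≤ n. There exists a constant c > 0 depending only on n and k such that: for every λ = (λ₁,…,λₙ) ∈ Γ_k ordered increasingly as λ₁ ≤ λ₂ ≤ ⋯ ≤ λₙ, one has λ_{n−k+1} > 0 and σ_{k−1}(λ | n−k+1) ≥ c · σ_{k−1}(λ). -/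
namespace Aux

open Finset Polynomial


open Finset Polynomial

lemma esymm_eq_multiset (n m : ℕ) (lam : Fin n → ℝ) :
    esymm n m lam = (Multiset.map lam Finset.univ.val).esymm m := by
  rw [Finset.esymm_map_val]; rfl

lemma multiset_esymm_zero (s : Multiset ℝ) : s.esymm 0 = 1 := by
  simp [Multiset.esymm]

lemma esymm_zero' (n : ℕ) (lam : Fin n → ℝ) : esymm n 0 lam = 1 := by
  rw [esymm_eq_multiset, multiset_esymm_zero]

lemma multiset_esymm_cons (a : ℝ) (s : Multiset ℝ) (m : ℕ) :
    (a ::ₘ s).esymm (m + 1) = s.esymm (m + 1) + a * s.esymm m := by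
  rw [Multiset.esymm, Multiset.powersetCard_cons, Multiset.map_add, Multiset.sum_add,
    Multiset.map_map]
  have h2 : (Multiset.map (Multiset.prod ∘ Multiset.cons a) (Multiset.powersetCard m s)).sum
      = a * s.esymm m := by
    rw [Multiset.esymm, ← Multiset.sum_map_mul_left]
    apply congrArg
    apply Multiset.map_congr rfl
    intro t _
    simp [Multiset.prod_cons]
  rw [h2]
  rfl

lemma multiset_esymm_cons_zero (s : Multiset ℝ) (m : ℕ) :
    ((0 : ℝ) ::ₘ s).esymm m = s.esymm m := by
  cases m with
  | zero => rw [multiset_esymm_zero, multiset_esymm_zero]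
  | succ m => rw [multiset_esymm_cons]; ring

lemma univ_val_eq (n : ℕ) (i : Fin n) :
    (Finset.univ : Finset (Fin n)).val = i ::ₘ (Finset.univ.erase i).val := by
  rw [Finset.erase_val, ← Multiset.cons_erase (s := (Finset.univ : Finset (Fin n)).val) (Finset.mem_univ i)]
  simp

lemma map_update_erase (n : ℕ) (lam : Fin n → ℝ) (i : Fin n) (c : ℝ) :
    Multiset.map (Function.update lam i c) (Finset.univ.erase i).val
      = Multiset.map lam (Finset.univ.erase i).val := by
  apply Multiset.map_congr rfl
  intro j hj
  have : j ≠ i := by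
    have := Finset.mem_erase.mp (Finset.mem_val.mp hj)
    exact this.1
  simp [Function.update_of_ne this]

/-- Key decomposition: `σ_{m+1}(λ) = σ_{m+1}(λ|i) + λ_i σ_m(λ|i)`. -/
lemma esymm_update (n m : ℕ) (lam : Fin n → ℝ) (i : Fin n) :
    esymm n (m + 1) lam
      = esymm n (m + 1) (Function.update lam i 0)
        + lam i * esymm n m (Function.update lam i 0) := by
  have h1 : Multiset.map lam Finset.univ.val
      = lam i ::ₘ Multiset.map lam (Finset.univ.erase i).val := by
    conv_lhs => rw [univ_val_eq n i]
    rw [Multiset.map_cons]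
  have h2 : Multiset.map (Function.update lam i 0) Finset.univ.val
      = (0 : ℝ) ::ₘ Multiset.map lam (Finset.univ.erase i).val := by
    conv_lhs => rw [univ_val_eq n i]
    rw [Multiset.map_cons, Function.update_self, map_update_erase]
  rw [esymm_eq_multiset, esymm_eq_multiset, esymm_eq_multiset, h1, h2,
    multiset_esymm_cons, multiset_esymm_cons_zero, multiset_esymm_cons_zero]

/-- general `m ≥ 1` version -/
lemma esymm_update' (n m : ℕ) (hm : 1 ≤ m) (lam : Fin n → ℝ) (i : Fin n) :
    esymm n m lam
      = esymm n m (Function.update lam i 0)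
        + lam i * esymm n (m - 1) (Function.update lam i 0) := by
  obtain ⟨m', rfl⟩ : ∃ m', m = m' + 1 := ⟨m - 1, by omega⟩
  simpa using esymm_update n m' lam i

lemma esymm_smul (n m : ℕ) (c : ℝ) (lam : Fin n → ℝ) :
    esymm n m (fun i => c * lam i) = c ^ m * esymm n m lam := by
  unfold esymm
  rw [Finset.mul_sum]
  apply Finset.sum_congr rfl
  intro s hs
  have hcard : s.card = m := (Finset.mem_powersetCard.mp hs).2
  rw [Finset.prod_mul_distrib, Finset.prod_const, hcard]

lemma esymm_one' (n : ℕ) (lam : Fin n → ℝ) : esymm n 1 lam = ∑ i, lam i := by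
  unfold esymm
  rw [Finset.powersetCard_one]
  rw [Finset.sum_map]
  apply Finset.sum_congr rfl
  intro i _
  simp

lemma esymm_big (n m : ℕ) (h : n < m) (lam : Fin n → ℝ) : esymm n m lam = 0 := by
  unfold esymm
  rw [Finset.powersetCard_eq_empty.mpr (by simpa using h), Finset.sum_empty]

lemma abs_esymm_le (n m : ℕ) (lam : Fin n → ℝ) (M : ℝ) (hM0 : 0 ≤ M)
    (hM : ∀ i, |lam i| ≤ M) :
    |esymm n m lam| ≤ (n.choose m : ℝ) * M ^ m := by
  unfold esymm
  calc |∑ s ∈ Finset.univ.powersetCard m, ∏ i ∈ s, lam i|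
      ≤ ∑ s ∈ Finset.univ.powersetCard m, |∏ i ∈ s, lam i| :=
        Finset.abs_sum_le_sum_abs _ _
    _ ≤ ∑ s ∈ Finset.univ.powersetCard m, M ^ m := by
        apply Finset.sum_le_sum
        intro s hs
        have hcard : s.card = m := (Finset.mem_powersetCard.mp hs).2
        rw [Finset.abs_prod, ← hcard, ← Finset.prod_const]
        exact Finset.prod_le_prod (fun i _ => abs_nonneg _) (fun i _ => hM i)
    _ = (n.choose m : ℝ) * M ^ m := by
        rw [Finset.sum_const, Finset.card_powersetCard, Finset.card_univ, Fintype.card_fin,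
          nsmul_eq_mul]




open Finset

lemma cnt {m : ℕ} (r : ℕ) (u : Fin m → ℝ) (T : Finset (Fin m)) :
    ∑ j ∈ T, ∑ s ∈ (T.erase j).powersetCard r, ∏ l ∈ s, u l
      = ((T.card - r : ℕ) : ℝ) * ∑ s ∈ T.powersetCard r, ∏ l ∈ s, u l := by
  have h1 : ∀ j ∈ T, ∑ s ∈ (T.erase j).powersetCard r, ∏ l ∈ s, u l
      = ∑ s ∈ T.powersetCard r, if j ∉ s then ∏ l ∈ s, u l else 0 := by
    intro j hj
    rw [← Finset.sum_filter]
    apply Finset.sum_congr _ (fun _ _ => rfl)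
    ext s
    simp only [Finset.mem_powersetCard, Finset.mem_filter, Finset.subset_erase]
    tauto
  rw [Finset.sum_congr rfl h1, Finset.sum_comm]
  rw [Finset.mul_sum]
  apply Finset.sum_congr rfl
  intro s hs
  obtain ⟨hsub, hcard⟩ := Finset.mem_powersetCard.mp hs
  rw [Finset.sum_ite, Finset.sum_const_zero, add_zero, Finset.sum_const, nsmul_eq_mul]
  congr 2
  have : T.filter (fun j => j ∉ s) = T \ s := by
    rw [Finset.sdiff_eq_filter]
  rw [this, Finset.card_sdiff_of_subset hsub, hcard]

lemma sum_erase_prod {m : ℕ} (u : Fin m → ℝ) (T : Finset (Fin m)) (hT : 1 ≤ T.card) :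
    ∑ j ∈ T, ∏ l ∈ T.erase j, u l
      = ∑ s ∈ T.powersetCard (T.card - 1), ∏ l ∈ s, u l := by
  have := cnt (T.card - 1) u T
  have h2 : ∀ j ∈ T, ∑ s ∈ (T.erase j).powersetCard (T.card - 1), ∏ l ∈ s, u l
      = ∏ l ∈ T.erase j, u l := by
    intro j hj
    have hc : (T.erase j).card = T.card - 1 := Finset.card_erase_of_mem hj
    rw [← hc, Finset.powersetCard_self, Finset.sum_singleton]
  rw [Finset.sum_congr rfl h2] at this
  rw [this]
  have : T.card - (T.card - 1) = 1 := by omega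
  rw [this]
  norm_num

lemma esymm_pred_eq_sum (m : ℕ) (hm : 1 ≤ m) (u : Fin m → ℝ) :
    esymm m (m - 1) u = ∑ i, ∏ l ∈ Finset.univ.erase i, u l := by
  have := sum_erase_prod u Finset.univ (by simpa using hm)
  rw [Finset.card_univ, Fintype.card_fin] at this
  rw [esymm, ← this]

lemma esymm_top (m : ℕ) (u : Fin m → ℝ) : esymm m m u = ∏ i, u i := by
  rw [esymm]
  have h : (Finset.univ : Finset (Fin m)).powersetCard m = {Finset.univ} := by
    simpa using Finset.powersetCard_self (Finset.univ : Finset (Fin m))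
  rw [h, Finset.sum_singleton]

lemma double_sum_eq (m : ℕ) (hm : 2 ≤ m) (u : Fin m → ℝ) :
    ∑ i, ∑ j ∈ Finset.univ.erase i, ∏ l ∈ (Finset.univ.erase i).erase j, u l
      = 2 * esymm m (m - 2) u := by
  have h1 : ∀ i ∈ (Finset.univ : Finset (Fin m)),
      ∑ j ∈ Finset.univ.erase i, ∏ l ∈ (Finset.univ.erase i).erase j, u l
        = ∑ s ∈ (Finset.univ.erase i).powersetCard (m - 2), ∏ l ∈ s, u l := by
    intro i _
    have hc : (Finset.univ.erase i).card = m - 1 := by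
      rw [Finset.card_erase_of_mem (Finset.mem_univ i), Finset.card_univ, Fintype.card_fin]
    have h2 : m - 1 - 1 = m - 2 := by omega
    have := sum_erase_prod u (Finset.univ.erase i) (by omega)
    rw [hc, h2] at this
    rw [this]
  rw [Finset.sum_congr rfl h1, cnt (m - 2) u Finset.univ]
  rw [Finset.card_univ, Fintype.card_fin]
  have : m - (m - 2) = 2 := by omega
  rw [this, esymm]
  norm_num

lemma pi_identity (m : ℕ) (hm : 2 ≤ m) (u : Fin m → ℝ) :
    esymm m (m - 1) u ^ 2
      = (∑ i, (∏ l ∈ Finset.univ.erase i, u l) ^ 2)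
        + 2 * esymm m m u * esymm m (m - 2) u := by
  set P : Fin m → ℝ := fun i => ∏ l ∈ Finset.univ.erase i, u l with hP
  have h1 : esymm m (m - 1) u = ∑ i, P i := esymm_pred_eq_sum m (by omega) u
  have hsq : (∑ i, P i) ^ 2 = ∑ i, ∑ j, P i * P j := by
    rw [sq, Finset.sum_mul_sum]
  have hsplit : ∀ i ∈ (Finset.univ : Finset (Fin m)), ∑ j, P i * P j
      = P i ^ 2 + ∑ j ∈ Finset.univ.erase i, P i * P j := by
    intro i _
    rw [← Finset.add_sum_erase _ _ (Finset.mem_univ i), sq]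
  have hcross : ∀ i ∈ (Finset.univ : Finset (Fin m)), ∀ j ∈ Finset.univ.erase i,
      P i * P j = (∏ l, u l) * ∏ l ∈ (Finset.univ.erase i).erase j, u l := by
    intro i _ j hj
    have hji : j ≠ i := (Finset.mem_erase.mp hj).1
    have hPi : P i = u j * ∏ l ∈ (Finset.univ.erase i).erase j, u l := by
      simp only [hP]
      exact (Finset.mul_prod_erase _ u hj).symm
    have hPj : P j = u i * ∏ l ∈ (Finset.univ.erase i).erase j, u l := by
      simp only [hP]
      have hi : i ∈ Finset.univ.erase j := Finset.mem_erase.mpr ⟨fun h => hji h.symm, Finset.mem_univ i⟩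
      rw [← Finset.mul_prod_erase _ u hi, Finset.erase_right_comm]
    have hprod : ∏ l, u l = u i * (u j * ∏ l ∈ (Finset.univ.erase i).erase j, u l) := by
      rw [← hPi, hP, Finset.mul_prod_erase _ u (Finset.mem_univ i)]
    rw [hPi, hPj, hprod]
    ring
  calc esymm m (m - 1) u ^ 2 = ∑ i, ∑ j, P i * P j := by rw [h1, hsq]
    _ = ∑ i, (P i ^ 2 + ∑ j ∈ Finset.univ.erase i, P i * P j) :=
        Finset.sum_congr rfl hsplit
    _ = (∑ i, P i ^ 2) + ∑ i, ∑ j ∈ Finset.univ.erase i, P i * P j := by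
        rw [Finset.sum_add_distrib]
    _ = (∑ i, P i ^ 2) + (∏ l, u l) * ∑ i, ∑ j ∈ Finset.univ.erase i,
          ∏ l ∈ (Finset.univ.erase i).erase j, u l := by
        congr 1
        rw [Finset.mul_sum]
        apply Finset.sum_congr rfl
        intro i hi
        rw [Finset.mul_sum]
        exact Finset.sum_congr rfl (hcross i hi)
    _ = (∑ i, P i ^ 2) + 2 * esymm m m u * esymm m (m - 2) u := by
        rw [double_sum_eq m hm u, esymm_top]
        ring

lemma core_aux (m : ℕ) (hm : 2 ≤ m) (u : Fin m → ℝ)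
    (h1 : esymm m (m - 1) u = 0)
    (hS : ∑ i, (∏ l ∈ Finset.univ.erase i, u l) ^ 2 = 0) : esymm m m u = 0 := by
  have hall : ∀ i : Fin m, ∏ l ∈ Finset.univ.erase i, u l = 0 := by
    intro i
    have h := (Finset.sum_eq_zero_iff_of_nonneg
      (fun i _ => sq_nonneg (∏ l ∈ Finset.univ.erase i, u l))).mp hS i (Finset.mem_univ i)
    exact pow_eq_zero_iff (two_ne_zero) |>.mp h
  have i0 : Fin m := ⟨0, by omega⟩
  rw [esymm_top, ← Finset.mul_prod_erase _ u (Finset.mem_univ i0), hall i0, mul_zero]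

lemma core1 (m : ℕ) (hm : 2 ≤ m) (u : Fin m → ℝ)
    (h1 : esymm m (m - 1) u = 0) (h2 : 0 ≤ esymm m (m - 2) u) : esymm m m u ≤ 0 := by
  have hid := pi_identity m hm u
  rw [h1] at hid
  have h0 : (0 : ℝ) = (∑ i, (∏ l ∈ Finset.univ.erase i, u l) ^ 2)
      + 2 * esymm m m u * esymm m (m - 2) u := by
    simpa using hid
  have hSnn : 0 ≤ ∑ i, (∏ l ∈ Finset.univ.erase i, u l) ^ 2 :=
    Finset.sum_nonneg fun i _ => sq_nonneg _
  rcases h2.lt_or_eq with h2' | h2'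
  · nlinarith
  · have hS : ∑ i, (∏ l ∈ Finset.univ.erase i, u l) ^ 2 = 0 := by
      rw [← h2', mul_zero, add_zero] at h0
      exact h0.symm
    exact le_of_eq (core_aux m hm u h1 hS)

lemma core2 (m : ℕ) (hm : 2 ≤ m) (u : Fin m → ℝ)
    (h1 : esymm m (m - 1) u = 0) (h2 : esymm m (m - 2) u = 0) : esymm m m u = 0 := by
  have hid := pi_identity m hm u
  rw [h1, h2] at hid
  have hS : ∑ i, (∏ l ∈ Finset.univ.erase i, u l) ^ 2 = 0 := by
    simp only [mul_zero, add_zero] at hid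
    simpa using hid.symm
  exact core_aux m hm u h1 hS




open Finset Polynomial

lemma multiset_enum (k : ℕ) (S : Multiset ℝ) (h : Multiset.card S = k) :
    ∃ u : Fin k → ℝ, Multiset.map u Finset.univ.val = S := by
  have hl : S.toList.length = k := by rw [Multiset.length_toList, h]
  subst hl
  refine ⟨S.toList.get, ?_⟩
  have h1 : (Finset.univ.val : Multiset (Fin S.toList.length))
      = ↑(List.finRange S.toList.length) := by
    simp [Fin.univ_def]
  rw [h1, Multiset.map_coe, ← List.ofFn_eq_map, List.ofFn_get]
  exact Multiset.coe_toList S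

lemma extract' (p : Polynomial ℝ) (d : ℕ) (hd : p.natDegree = d) (hp : p ≠ 0)
    (hroots : p.roots.card = p.natDegree) :
    ∃ u : Fin d → ℝ, ∀ m, m ≤ d →
      p.coeff m = p.leadingCoeff * esymm d (d - m) u := by
  subst hd
  have hsplit : Splits p := splits_iff_card_roots.mpr hroots
  have heq := hsplit.eq_prod_roots
  obtain ⟨u, hu⟩ := multiset_enum p.natDegree (p.roots.map (fun x => -x))
    (by rw [Multiset.card_map, hroots])
  refine ⟨u, fun m hm => ?_⟩
  have h1 : p.coeff m
      = p.leadingCoeff * ((p.roots.map fun a => X - C a).prod.coeff m) := by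
    conv_lhs => rw [heq]
    rw [coeff_C_mul]
  have h2 : ∀ j, esymm p.natDegree j u = (-1 : ℝ)^j * p.roots.esymm j := by
    intro j
    rw [esymm_eq_multiset, hu]
    exact Multiset.esymm_neg p.roots j
  rw [h1, Multiset.prod_X_sub_C_coeff _ (by rw [hroots]; exact hm), hroots, h2]

lemma rm_le_natDegree (q : Polynomial ℝ) (hq : q ≠ 0) (a : ℝ) :
    q.rootMultiplicity a ≤ q.natDegree := by
  have h1 := Polynomial.pow_rootMultiplicity_dvd q a
  have h2 := Polynomial.natDegree_le_of_dvd h1 hq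
  simpa [Polynomial.natDegree_pow, Polynomial.natDegree_X_sub_C] using h2

lemma rr_derivative (p : Polynomial ℝ) (hd : 1 ≤ p.natDegree)
    (hroots : p.roots.card = p.natDegree) :
    (Polynomial.derivative p) ≠ 0 ∧ (Polynomial.derivative p).natDegree = p.natDegree - 1 ∧
      (Polynomial.derivative p).roots.card = (Polynomial.derivative p).natDegree := by
  have hne : Polynomial.derivative p ≠ 0 := by
    intro h
    have := Polynomial.natDegree_eq_zero_of_derivative_eq_zero h
    omega
  have h1 : p.natDegree - 1 ≤ (Polynomial.derivative p).roots.card := by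
    have := Polynomial.card_roots_le_derivative p
    omega
  have h2 : (Polynomial.derivative p).natDegree ≤ p.natDegree - 1 := by
    have := Polynomial.natDegree_derivative_lt (show p.natDegree ≠ 0 by omega)
    omega
  have h3 := Polynomial.card_roots' (Polynomial.derivative p)
  exact ⟨hne, by omega, by omega⟩

lemma rr_iterate (p : Polynomial ℝ) (hp : p ≠ 0)
    (hroots : p.roots.card = p.natDegree) (j : ℕ) (hj : j ≤ p.natDegree) :
    (Polynomial.derivative^[j] p) ≠ 0
      ∧ (Polynomial.derivative^[j] p).natDegree = p.natDegree - j
      ∧ (Polynomial.derivative^[j] p).roots.card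
          = (Polynomial.derivative^[j] p).natDegree := by
  induction j with
  | zero => exact ⟨hp, by simp, by simpa using hroots⟩
  | succ j ih =>
    obtain ⟨h1, h2, h3⟩ := ih (by omega)
    rw [Function.iterate_succ_apply']
    have hd1 : 1 ≤ (Polynomial.derivative^[j] p).natDegree := by omega
    obtain ⟨g1, g2, g3⟩ := rr_derivative _ hd1 h3
    exact ⟨g1, by omega, g3⟩

lemma toolkit (n k : ℕ) (hk2 : 2 ≤ k) (hkn : k ≤ n) (y : Fin n → ℝ) :
    ∃ u : Fin k → ℝ, ∃ b : ℕ → ℝ, ∀ m, m ≤ k →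
      0 < b m ∧ esymm k m u = b m * esymm n m y := by
  classical
  set P := ∏ i : Fin n, (Polynomial.X + Polynomial.C (y i)) with hP
  have hmon : ∀ i ∈ (Finset.univ : Finset (Fin n)), (Polynomial.X + Polynomial.C (y i)).Monic :=
    fun i _ => monic_X_add_C (y i)
  have hPm : P.Monic := monic_prod_of_monic _ _ hmon
  have hPne : P ≠ 0 := hPm.ne_zero
  have hPd : P.natDegree = n := by
    rw [hP, natDegree_prod_of_monic _ _ hmon]
    simp [natDegree_X_add_C]
  have hPcoeff : ∀ m, m ≤ n → P.coeff m = esymm n (n - m) y := by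
    intro m hm
    rw [hP, Finset.prod_X_add_C_coeff _ _ (by simpa using hm)]
    simp [esymm]
  have hPsplits : Splits P := by
    apply Splits.prod
    intro i _
    exact Splits.of_natDegree_le_one (le_of_eq (natDegree_X_add_C (y i)))
  have hProots : P.roots.card = P.natDegree := splits_iff_card_roots.mp hPsplits
  set Q := Polynomial.derivative^[n - k] P with hQ
  obtain ⟨hQne, hQd, hQroots⟩ := rr_iterate P hPne hProots (n - k) (by omega)
  rw [← hQ] at hQne hQd hQroots
  rw [hPd] at hQd
  have hQdeg : Q.natDegree = k := by omega
  have hQcoeff : ∀ m, m ≤ k →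
      Q.coeff m = ((m + (n - k)).descFactorial (n - k) : ℝ) * esymm n (k - m) y := by
    intro m hm
    rw [hQ, Polynomial.coeff_iterate_derivative, hPcoeff (m + (n - k)) (by omega)]
    have : n - (m + (n - k)) = k - m := by omega
    rw [this, nsmul_eq_mul]
  have hlc : Q.leadingCoeff = ((k + (n - k)).descFactorial (n - k) : ℝ) := by
    rw [Polynomial.leadingCoeff, hQdeg, hQcoeff k le_rfl]
    have : k - k = 0 := by omega
    rw [this, esymm_zero', mul_one]
  have hdfpos : ∀ m : ℕ, (0 : ℝ) < ((m + (n - k)).descFactorial (n - k) : ℝ) := by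
    intro m
    have : (m + (n - k)).descFactorial (n - k) ≠ 0 := by
      rw [Ne, Nat.descFactorial_eq_zero_iff_lt]
      omega
    have h2 : 0 < (m + (n - k)).descFactorial (n - k) := Nat.pos_of_ne_zero this
    exact_mod_cast h2
  obtain ⟨u, hu⟩ := extract' Q k hQdeg hQne hQroots
  refine ⟨u, fun j => ((k - j + (n - k)).descFactorial (n - k) : ℝ)
      / ((k + (n - k)).descFactorial (n - k) : ℝ), fun j hj => ?_⟩
  constructor
  · exact div_pos (hdfpos _) (hdfpos _)
  · have h1 := hu (k - j) (by omega)
    rw [hQcoeff (k - j) (by omega), hlc] at h1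
    have hkj : k - (k - j) = j := by omega
    rw [hkj] at h1
    dsimp only
    rw [div_mul_eq_mul_div, eq_div_iff (ne_of_gt (hdfpos k))]
    nlinarith [h1]

lemma star' (n k : ℕ) (hk2 : 2 ≤ k) (hkn : k ≤ n) (y : Fin n → ℝ)
    (h1 : esymm n (k - 1) y = 0) (h2 : 0 ≤ esymm n (k - 2) y) : esymm n k y ≤ 0 := by
  obtain ⟨u, b, hb⟩ := toolkit n k hk2 hkn y
  have e1 : esymm k (k - 1) u = 0 := by
    rw [(hb (k - 1) (by omega)).2, h1, mul_zero]
  have e2 : 0 ≤ esymm k (k - 2) u := by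
    rw [(hb (k - 2) (by omega)).2]
    exact mul_nonneg (le_of_lt (hb (k - 2) (by omega)).1) h2
  have e3 := core1 k hk2 u e1 e2
  rw [(hb k le_rfl).2] at e3
  have hbk := (hb k le_rfl).1
  nlinarith

lemma L2 (p : Polynomial ℝ) (hroots : p.roots.card = p.natDegree) (h0 : p.eval 0 ≠ 0) :
    (Polynomial.derivative p).rootMultiplicity 0 ≤ 1 := by
  have hp : p ≠ 0 := fun h => h0 (by rw [h]; simp)
  by_cases hlow : p.natDegree ≤ 1
  · by_cases hz : Polynomial.derivative p = 0
    · rw [hz]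
      simp [Polynomial.rootMultiplicity_zero]
    · have := rm_le_natDegree (Polynomial.derivative p) hz 0
      have h2 : (Polynomial.derivative p).natDegree ≤ p.natDegree - 1 := by
        have := Polynomial.natDegree_derivative_lt
          (show p.natDegree ≠ 0 by
            intro h
            exact hz (by rw [Polynomial.eq_C_of_natDegree_eq_zero h]; simp))
        omega
      omega
  · push_neg at hlow
    by_contra hcon
    push_neg at hcon
    have hz : Polynomial.derivative p ≠ 0 := by
      intro h
      rw [h, Polynomial.rootMultiplicity_zero] at hcon
      omega
    have hdvd : (Polynomial.X : Polynomial ℝ) ^ 2 ∣ Polynomial.derivative p := by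
      have h1 := Polynomial.pow_rootMultiplicity_dvd (Polynomial.derivative p) 0
      have h2 : ((Polynomial.X : Polynomial ℝ) - Polynomial.C 0) ^ 2
          ∣ (Polynomial.X - Polynomial.C 0) ^ ((Polynomial.derivative p).rootMultiplicity 0) :=
        pow_dvd_pow _ (by omega)
      have := dvd_trans h2 h1
      simpa using this
    have hcoeffs := Polynomial.X_pow_dvd_iff.mp hdvd
    have hc1 : p.coeff 1 = 0 := by
      have := hcoeffs 0 (by norm_num)
      rw [Polynomial.coeff_derivative] at this
      simpa using this
    have hc2 : p.coeff 2 = 0 := by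
      have := hcoeffs 1 (by norm_num)
      rw [Polynomial.coeff_derivative] at this
      have h2 : p.coeff 2 * 2 = 0 := by
        norm_num at this
        linarith
      linarith
    obtain ⟨u, hu⟩ := extract' p p.natDegree rfl hp hroots
    have hlc : p.leadingCoeff ≠ 0 := Polynomial.leadingCoeff_ne_zero.mpr hp
    have e1 : esymm p.natDegree (p.natDegree - 1) u = 0 := by
      have h := hu 1 (by omega)
      rw [hc1] at h
      exact (mul_eq_zero.mp h.symm).resolve_left hlc
    have e2 : esymm p.natDegree (p.natDegree - 2) u = 0 := by
      have h := hu 2 (by omega)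
      rw [hc2] at h
      exact (mul_eq_zero.mp h.symm).resolve_left hlc
    have e3 : esymm p.natDegree p.natDegree u ≠ 0 := by
      have h := hu 0 (by omega)
      rw [Polynomial.coeff_zero_eq_eval_zero, Nat.sub_zero] at h
      intro hzz
      rw [hzz, mul_zero] at h
      exact h0 h
    exact e3 (core2 p.natDegree (by omega) u e1 e2)

lemma chain (p : Polynomial ℝ) (hp : p ≠ 0) (hroots : p.roots.card = p.natDegree)
    (j : ℕ) (hj : j ≤ p.natDegree) :
    (Polynomial.derivative^[j] p).rootMultiplicity 0
      ≤ max (p.rootMultiplicity 0 - j) 1 := by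
  induction j with
  | zero =>
    simp only [Function.iterate_zero_apply, Nat.sub_zero]
    exact le_max_of_le_left le_rfl
  | succ j ih =>
    have ihj := ih (by omega)
    obtain ⟨h1, h2, h3⟩ := rr_iterate p hp hroots j (by omega)
    rw [Function.iterate_succ_apply']
    set q := Polynomial.derivative^[j] p with hq
    by_cases hr : q.IsRoot 0
    · have heq := Polynomial.derivative_rootMultiplicity_of_root hr
      rw [heq]
      have hpos : 1 ≤ q.rootMultiplicity 0 := (Polynomial.rootMultiplicity_pos h1).mpr hr
      have hmax : ∀ a b c : ℕ, a ≤ max b 1 → 1 ≤ a → b ≤ c + 1 → a - 1 ≤ max c 1 := by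
        intro a b c hab ha hbc
        rcases Nat.le_total b 1 with h | h
        · simp only [Nat.max_def] at *
          split_ifs at * <;> omega
        · simp only [Nat.max_def] at *
          split_ifs at * <;> omega
      exact hmax _ _ _ ihj hpos (by omega)
    · have := L2 q h3 (by simpa [Polynomial.IsRoot] using hr)
      exact le_trans this (le_max_right _ _)




open Finset Polynomial

lemma gammaK_mono {n k j : ℕ} (h : j ≤ k) {lam : Fin n → ℝ} (hl : lam ∈ GammaK n k) :
    lam ∈ GammaK n j := fun m hm1 hm2 => hl m hm1 (le_trans hm2 h)

lemma gammaK_le_n {n k : ℕ} {lam : Fin n → ℝ} (hl : lam ∈ GammaK n k) (hk : 1 ≤ k) :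
    k ≤ n := by
  by_contra h
  push_neg at h
  have := hl k hk le_rfl
  rw [esymm_big n k h lam] at this
  exact lt_irrefl 0 this

lemma gamma_pos {n m : ℕ} {lam : Fin n → ℝ} (hl : lam ∈ GammaK n m) :
    ∀ j, j ≤ m → 0 < esymm n j lam := by
  intro j hj
  rcases Nat.eq_zero_or_pos j with h | h
  · rw [h, esymm_zero']; norm_num
  · exact hl j h hj

theorem update_mem_gammaK : ∀ (k n : ℕ) (lam : Fin n → ℝ), lam ∈ GammaK n k →
    ∀ i, Function.update lam i 0 ∈ GammaK n (k - 1) := by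
  intro k
  induction k with
  | zero => intro n lam _ i j hj1 hj2; omega
  | succ k ih =>
    intro n lam hlam i
    rcases Nat.eq_zero_or_pos k with hk0 | hk1
    · subst hk0; intro j hj1 hj2; omega
    -- now 1 ≤ k, lam ∈ GammaK n (k+1)
    have hkn : k + 1 ≤ n := gammaK_le_n hlam (by omega)
    have hne : Nonempty (Fin n) := ⟨⟨0, by omega⟩⟩
    obtain ⟨i₁, -, hmax⟩ := Finset.exists_max_image Finset.univ lam Finset.univ_nonempty
    have hmax' : ∀ a, lam a ≤ lam i₁ := fun a => hmax a (Finset.mem_univ a)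
    set ν := Function.update lam i₁ 0 with hν
    have hνk1 : ν ∈ GammaK n (k - 1) :=
      ih n lam (gammaK_mono (Nat.le_succ k) hlam) i₁
    -- Step A : 0 < esymm n k ν
    have hA : 0 < esymm n k ν := by
      by_contra hA
      push_neg at hA
      have hs2 : 0 < esymm n (k - 1) ν := gamma_pos hνk1 (k - 1) le_rfl
      set t₀ : ℝ := -(esymm n k ν) / esymm n (k - 1) ν with ht₀
      have ht₀nn : 0 ≤ t₀ := div_nonneg (by linarith) (le_of_lt hs2)
      set y := Function.update lam i₁ t₀ with hy
      have hupd : ∀ m : ℕ, esymm n (m + 1) y = esymm n (m + 1) ν + t₀ * esymm n m ν := by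
        intro m
        have h1 := esymm_update n m y i₁
        have h2 : Function.update y i₁ 0 = ν := by
          rw [hy, hν]
          exact Function.update_idem ..
        have h3 : y i₁ = t₀ := Function.update_self ..
        rw [h2, h3] at h1
        exact h1
      have hflam : ∀ m : ℕ, esymm n (m + 1) lam = esymm n (m + 1) ν + lam i₁ * esymm n m ν := by
        intro m
        have h1 := esymm_update n m lam i₁
        rw [← hν] at h1
        exact h1
      -- esymm n k y = 0
      have hky : esymm n k y = 0 := by
        obtain ⟨k', rfl⟩ : ∃ k', k = k' + 1 := ⟨k - 1, by omega⟩
        rw [hupd k']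
        have : k' + 1 - 1 = k' := by omega
        rw [this] at ht₀ hs2
        rw [ht₀]
        field_simp
        ring
      -- 0 ≤ esymm n (k-1) y
      have hk1y : 0 ≤ esymm n (k - 1) y := by
        rcases Nat.eq_zero_or_pos (k - 1) with h0 | hpos
        · rw [h0, esymm_zero']; norm_num
        · obtain ⟨k', hk'⟩ : ∃ k', k - 1 = k' + 1 := ⟨k - 1 - 1, by omega⟩
          rw [hk', hupd k']
          have p1 : 0 < esymm n (k' + 1) ν := gamma_pos hνk1 (k' + 1) (by omega)
          have p2 : 0 ≤ esymm n k' ν := le_of_lt (gamma_pos hνk1 k' (by omega))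
          nlinarith
      -- t₀ < lam i₁
      have hti : t₀ < lam i₁ := by
        have hlamk : 0 < esymm n k lam := hlam k (by omega) (by omega)
        obtain ⟨k', hk'⟩ : ∃ k', k = k' + 1 := ⟨k - 1, by omega⟩
        have h1 := hflam k'
        rw [← hk'] at h1
        have hk'e : k' = k - 1 := by omega
        rw [hk'e] at h1
        rw [ht₀, div_lt_iff₀ hs2]
        nlinarith
      -- 0 < esymm n (k+1) y
      have hky1 : 0 < esymm n (k + 1) y := by
        have h1 := hupd k
        have h2 := hflam k
        have h3 : 0 < esymm n (k + 1) lam := hlam (k + 1) (by omega) le_rfl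
        nlinarith
      have := star' n (k + 1) (by omega) hkn y (by simpa using hky) (by simpa using hk1y)
      linarith
    -- ν ∈ GammaK n k
    have hνk : ν ∈ GammaK n k := by
      intro j hj1 hj2
      rcases Nat.lt_or_ge j k with h | h
      · exact hνk1 j hj1 (by omega)
      · have : j = k := by omega
        rw [this]; exact hA
    -- Step B
    intro j hj1 hj2
    have hjk : j ≤ k := by omega
    by_cases hii : i = i₁
    · subst hii
      exact gamma_pos hνk j hjk
    · rcases Nat.lt_or_ge j k with h | h
      · exact ih n lam (gammaK_mono (Nat.le_succ k) hlam) i j hj1 (by omega)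
      · have hjeq : j = k := by omega
        rw [hjeq]
        -- exchange argument
        set C := Function.update ν i 0 with hC
        have hC' : Function.update (Function.update lam i 0) i₁ 0 = C := by
          rw [hC, hν]
          exact Function.update_comm hii _ _ _
        have hCg : C ∈ GammaK n (k - 1) := by
          have := ih n ν hνk i
          simpa [hC] using this
        obtain ⟨k', rfl⟩ : ∃ k', k = k' + 1 := ⟨k - 1, by omega⟩
        have e1 : esymm n (k' + 1) (Function.update lam i 0)
            = esymm n (k' + 1) C + lam i₁ * esymm n k' C := by
          have h1 := esymm_update n k' (Function.update lam i 0) i₁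
          rw [hC', Function.update_of_ne (Ne.symm hii) _ _] at h1
          exact h1
        have e2 : esymm n (k' + 1) ν = esymm n (k' + 1) C + lam i * esymm n k' C := by
          have h1 := esymm_update n k' ν i
          have hνi : ν i = lam i := Function.update_of_ne hii _ _
          rw [← hC, hνi] at h1
          exact h1
        have hCk' : 0 ≤ esymm n k' C := le_of_lt (gamma_pos hCg k' (by omega))
        have hle : lam i ≤ lam i₁ := hmax' i
        rw [e1]
        nlinarith [hA, e2]




open Finset Polynomial

/-- zero out a set of coordinates -/
noncomputable def zs {n : ℕ} (S : Finset (Fin n)) (lam : Fin n → ℝ) : Fin n → ℝ :=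
  fun i => if i ∈ S then 0 else lam i

lemma zs_empty {n : ℕ} (lam : Fin n → ℝ) : zs ∅ lam = lam := by
  funext i; simp [zs]

lemma zs_insert {n : ℕ} (a : Fin n) (S : Finset (Fin n)) (lam : Fin n → ℝ) (ha : a ∉ S) :
    zs (insert a S) lam = Function.update (zs S lam) a 0 := by
  funext i
  by_cases h : i = a
  · subst h; simp [zs, Function.update_self]
  · rw [Function.update_of_ne h]
    simp only [zs, Finset.mem_insert]
    by_cases h2 : i ∈ S <;> simp [h, h2]

lemma zs_mem_gammaK {n k : ℕ} {lam : Fin n → ℝ} (hl : lam ∈ GammaK n k) :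
    ∀ S : Finset (Fin n), zs S lam ∈ GammaK n (k - S.card) := by
  intro S
  induction S using Finset.induction_on with
  | empty => rw [zs_empty]; simpa using hl
  | @insert a S ha ih =>
    rw [zs_insert a S lam ha]
    have := update_mem_gammaK (k - S.card) n (zs S lam) ih a
    have hcard : (insert a S).card = S.card + 1 := Finset.card_insert_of_notMem ha
    rw [hcard]
    have harith : k - S.card - 1 = k - (S.card + 1) := by omega
    rw [harith] at this
    exact this

def Pivot (n k : ℕ) (lam : Fin n → ℝ) (i₀ : Fin n) (W : Finset (Fin n)) : Prop :=
  i₀ ∉ W ∧ W.card = k - 1 ∧ (∀ w ∈ W, lam i₀ ≤ lam w)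
    ∧ (∀ i, i ∉ W → i ≠ i₀ → lam i ≤ lam i₀)

lemma sum_compl_pos {n k : ℕ} {lam : Fin n → ℝ} {i₀ : Fin n} {W : Finset (Fin n)}
    (hk : 1 ≤ k) (hl : lam ∈ GammaK n k) (hp : Pivot n k lam i₀ W) :
    0 < ∑ i ∈ Finset.univ.filter (· ∉ W), lam i := by
  have h1 := zs_mem_gammaK hl W
  rw [hp.2.1] at h1
  have hkk : k - (k - 1) = 1 := by omega
  rw [hkk] at h1
  have h2 := h1 1 le_rfl le_rfl
  rw [esymm_one'] at h2
  have h3 : ∑ i, zs W lam i = ∑ i ∈ Finset.univ.filter (· ∉ W), lam i := by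
    rw [← Finset.sum_filter_add_sum_filter_not Finset.univ (· ∈ W) (zs W lam)]
    have hz1 : ∑ i ∈ Finset.univ.filter (· ∈ W), zs W lam i = 0 := by
      apply Finset.sum_eq_zero
      intro i hi
      simp only [Finset.mem_filter] at hi
      simp [zs, hi.2]
    have hz2 : ∀ i ∈ Finset.univ.filter (· ∉ W), zs W lam i = lam i := by
      intro i hi
      simp only [Finset.mem_filter] at hi
      simp [zs, hi.2]
    rw [hz1, zero_add, Finset.sum_congr rfl hz2]
  rw [h3] at h2
  exact h2

lemma pivot_t_pos {n k : ℕ} {lam : Fin n → ℝ} {i₀ : Fin n} {W : Finset (Fin n)}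
    (hk : 1 ≤ k) (hl : lam ∈ GammaK n k) (hp : Pivot n k lam i₀ W) :
    0 < lam i₀ := by
  have h2 := sum_compl_pos hk hl hp
  have hbound : ∑ i ∈ Finset.univ.filter (· ∉ W), lam i
      ≤ (Finset.univ.filter (· ∉ W)).card • lam i₀ := by
    apply Finset.sum_le_card_nsmul
    intro i hi
    simp only [Finset.mem_filter] at hi
    by_cases h : i = i₀
    · subst h; exact le_rfl
    · exact hp.2.2.2 i hi.2 h
  rw [nsmul_eq_mul] at hbound
  by_contra hcon
  push_neg at hcon
  have : ((Finset.univ.filter (· ∉ W)).card : ℝ) * lam i₀ ≤ 0 :=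
    mul_nonpos_of_nonneg_of_nonpos (Nat.cast_nonneg _) hcon
  linarith

lemma pivot_lower {n k : ℕ} {lam : Fin n → ℝ} {i₀ : Fin n} {W : Finset (Fin n)}
    (hk : 1 ≤ k) (hl : lam ∈ GammaK n k) (hp : Pivot n k lam i₀ W) :
    ∀ i, -((n : ℝ) * lam i₀) ≤ lam i := by
  intro i
  have ht := pivot_t_pos hk hl hp
  have hnt : 0 < (n : ℝ) * lam i₀ := by
    have hn : 0 < n := i.pos
    positivity
  by_cases hiW : i ∈ W
  · have := hp.2.2.1 i hiW
    nlinarith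
  · have h2 := sum_compl_pos hk hl hp
    have hmem : i ∈ Finset.univ.filter (· ∉ W) := by simp [hiW]
    have hsplit : ∑ j ∈ Finset.univ.filter (· ∉ W), lam j
        = lam i + ∑ j ∈ (Finset.univ.filter (· ∉ W)).erase i, lam j := by
      rw [Finset.add_sum_erase _ _ hmem]
    have hrest : ∑ j ∈ (Finset.univ.filter (· ∉ W)).erase i, lam j
        ≤ ((Finset.univ.filter (· ∉ W)).erase i).card • lam i₀ := by
      apply Finset.sum_le_card_nsmul
      intro j hj
      have hj2 := Finset.mem_of_mem_erase hj
      simp only [Finset.mem_filter] at hj2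
      by_cases h : j = i₀
      · subst h; exact le_rfl
      · exact hp.2.2.2 j hj2.2 h
    rw [nsmul_eq_mul] at hrest
    have hcard : (((Finset.univ.filter (· ∉ W)).erase i).card : ℝ) ≤ (n : ℝ) := by
      have h1 : ((Finset.univ.filter (· ∉ W)).erase i).card ≤ n := by
        calc ((Finset.univ.filter (· ∉ W)).erase i).card
            ≤ (Finset.univ : Finset (Fin n)).card := Finset.card_le_card (fun x _ => Finset.mem_univ x)
          _ = n := by simp
      exact_mod_cast h1
    nlinarith




open Finset Polynomial

/-- THE critical boundary lemma -/
lemma CL (n k : ℕ) (hk2 : 2 ≤ k) (hkn : k ≤ n) (μ : Fin n → ℝ) (i₀ : Fin n)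
    (W : Finset (Fin n)) (hW : i₀ ∉ W) (hWc : W.card = k - 1)
    (hW1 : ∀ w ∈ W, 1 ≤ μ w)
    (hμ0 : μ i₀ = 1)
    (hσ : ∀ j, 1 ≤ j → j ≤ k → 0 ≤ esymm n j μ)
    (hσν : ∀ j, 1 ≤ j → j ≤ k - 1 → 0 ≤ esymm n j (Function.update μ i₀ 0)) :
    0 < esymm n (k - 1) (Function.update μ i₀ 0) := by
  set ν := Function.update μ i₀ 0 with hν
  rcases (hσν (k - 1) (by omega) le_rfl).lt_or_eq with h | h0
  · exact h
  exfalso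
  -- σ_k(ν) = 0
  have e1 : esymm n k μ = esymm n k ν + esymm n (k - 1) ν := by
    have := esymm_update' n k (by omega) μ i₀
    rw [hμ0, one_mul] at this
    exact this
  have hkν0 : esymm n k ν = 0 := by
    have hle : esymm n k ν ≤ 0 := by
      apply star' n k hk2 hkn ν h0.symm
      rcases Nat.eq_zero_or_pos (k - 2) with hz | hpos
      · rw [hz, esymm_zero']; norm_num
      · exact hσν (k - 2) (by omega) (by omega)
    have hge : 0 ≤ esymm n k ν := by
      have h1 := hσ k (by omega) le_rfl
      rw [e1, ← h0, add_zero] at h1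
      exact h1
    linarith
  -- the polynomial
  set P := ∏ i : Fin n, (Polynomial.X + Polynomial.C (ν i)) with hP
  have hmon : ∀ i ∈ (Finset.univ : Finset (Fin n)), (Polynomial.X + Polynomial.C (ν i)).Monic :=
    fun i _ => monic_X_add_C (ν i)
  have hPm : P.Monic := monic_prod_of_monic _ _ hmon
  have hPne : P ≠ 0 := hPm.ne_zero
  have hPd : P.natDegree = n := by
    rw [hP, natDegree_prod_of_monic _ _ hmon]
    simp [natDegree_X_add_C]
  have hPcoeff : ∀ m, m ≤ n → P.coeff m = esymm n (n - m) ν := by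
    intro m hm
    rw [hP, Finset.prod_X_add_C_coeff _ _ (by simpa using hm)]
    simp [esymm]
  have hPsplits : Splits P := by
    apply Splits.prod
    intro i _
    exact Splits.of_natDegree_le_one (le_of_eq (natDegree_X_add_C (ν i)))
  have hProots : P.roots.card = P.natDegree := splits_iff_card_roots.mp hPsplits
  set Q := Polynomial.derivative^[n - k] P with hQ
  obtain ⟨hQne, hQd, hQroots⟩ := rr_iterate P hPne hProots (n - k) (by omega)
  rw [← hQ] at hQne hQd hQroots
  rw [hPd] at hQd
  -- coeff Q 0 = c * esymm n k ν, coeff Q 1 = c * esymm n (k-1) ν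
  have hQcoeff : ∀ m, m ≤ k →
      Q.coeff m = ((m + (n - k)).descFactorial (n - k) : ℝ) * esymm n (k - m) ν := by
    intro m hm
    rw [hQ, Polynomial.coeff_iterate_derivative, hPcoeff (m + (n - k)) (by omega)]
    have : n - (m + (n - k)) = k - m := by omega
    rw [this, nsmul_eq_mul]
  have hc0 : Q.coeff 0 = 0 := by
    rw [hQcoeff 0 (by omega), Nat.sub_zero, hkν0, mul_zero]
  have hc1 : Q.coeff 1 = 0 := by
    rw [hQcoeff 1 (by omega), ← h0, mul_zero]
  -- 2 ≤ rootMultiplicity 0 Q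
  have hdvd : (Polynomial.X : Polynomial ℝ) ^ 2 ∣ Q := by
    rw [Polynomial.X_pow_dvd_iff]
    intro d hd
    interval_cases d
    · exact hc0
    · exact hc1
  have hrm2 : 2 ≤ Q.rootMultiplicity 0 := by
    rw [Polynomial.le_rootMultiplicity_iff hQne]
    simpa using hdvd
  -- rootMultiplicity 0 P ≤ n - k + 1
  have hrmP : P.rootMultiplicity 0 ≤ n - k + 1 := by
    have hsplitP : P = (∏ i ∈ W, (Polynomial.X + Polynomial.C (ν i)))
        * ∏ i ∈ Wᶜ, (Polynomial.X + Polynomial.C (ν i)) := by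
      rw [hP, Finset.prod_mul_prod_compl]
    set A := ∏ i ∈ W, (Polynomial.X + Polynomial.C (ν i)) with hA
    set B := ∏ i ∈ Wᶜ, (Polynomial.X + Polynomial.C (ν i)) with hB
    have hAne : A ≠ 0 := (monic_prod_of_monic _ _ (fun i _ => monic_X_add_C _)).ne_zero
    have hBne : B ≠ 0 := (monic_prod_of_monic _ _ (fun i _ => monic_X_add_C _)).ne_zero
    have hmul := Polynomial.rootMultiplicity_mul (x := (0 : ℝ))
      (show A * B ≠ 0 from mul_ne_zero hAne hBne)
    have hrmA : A.rootMultiplicity 0 = 0 := by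
      apply Polynomial.rootMultiplicity_eq_zero
      simp only [Polynomial.IsRoot, hA, Polynomial.eval_prod, Polynomial.eval_add,
        Polynomial.eval_X, Polynomial.eval_C, zero_add]
      have h1 : (0 : ℝ) < ∏ i ∈ W, ν i := by
        apply Finset.prod_pos
        intro w hw
        have := hW1 w hw
        have hwne : w ≠ i₀ := fun h => hW (h ▸ hw)
        have : ν w = μ w := Function.update_of_ne hwne _ _
        linarith [hW1 w hw, this ▸ (by linarith [hW1 w hw] : (0:ℝ) < μ w)]
      linarith
    have hrmB : B.rootMultiplicity 0 ≤ n - k + 1 := by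
      have h1 := rm_le_natDegree B hBne 0
      have h2 : B.natDegree = Wᶜ.card := by
        rw [hB, natDegree_prod_of_monic _ _ (fun i _ => monic_X_add_C _)]
        simp [natDegree_X_add_C]
      have h3 : Wᶜ.card = n - (k - 1) := by
        rw [Finset.card_compl, hWc]
        simp
      omega
    rw [hsplitP, hmul, hrmA, zero_add]
    exact hrmB
  -- chain gives contradiction
  have hch := chain P hPne hProots (n - k) (by omega)
  rw [← hQ] at hch
  have : max (P.rootMultiplicity 0 - (n - k)) 1 ≤ 1 := by
    have : P.rootMultiplicity 0 - (n - k) ≤ 1 := by omega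
    omega
  omega




open Finset Polynomial

-- (Pivot already defined)

lemma cont_esymm (n m : ℕ) : Continuous fun lam : Fin n → ℝ => esymm n m lam := by
  unfold esymm
  exact continuous_finset_sum _ fun s _ =>
    continuous_finset_prod s fun i _ => continuous_apply i

lemma cont_update (n : ℕ) (i₀ : Fin n) :
    Continuous fun lam : Fin n → ℝ => Function.update lam i₀ 0 := by
  apply continuous_pi
  intro j
  by_cases h : j = i₀
  · subst h
    simp only [Function.update_self]
    exact continuous_const
  · simp only [Function.update_of_ne h]
    exact continuous_apply j

lemma closure_nonneg {n : ℕ} {T : Set (Fin n → ℝ)} {g : (Fin n → ℝ) → ℝ}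
    (hg : Continuous g) (h : ∀ x ∈ T, 0 ≤ g x) :
    ∀ x ∈ closure T, 0 ≤ g x := by
  have hsub : closure T ⊆ {x | 0 ≤ g x} :=
    closure_minimal h (isClosed_le continuous_const hg)
  exact fun x hx => hsub hx

lemma closure_eq_one {n : ℕ} {T : Set (Fin n → ℝ)} {i₀ : Fin n}
    (h : ∀ x ∈ T, x i₀ = 1) :
    ∀ x ∈ closure T, x i₀ = 1 := by
  have hsub : closure T ⊆ {x | x i₀ = 1} :=
    closure_minimal h (isClosed_eq (continuous_apply i₀) continuous_const)
  exact fun x hx => hsub hx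

lemma comp_bound (n k : ℕ) (hk2 : 2 ≤ k) (hkn : k ≤ n) (i₀ : Fin n) (W : Finset (Fin n)) :
    ∃ c : ℝ, 0 < c ∧ ∀ μ : Fin n → ℝ, μ ∈ GammaK n k → Pivot n k μ i₀ W → μ i₀ = 1 →
      (∀ w ∈ W, μ w ≤ 2) → c ≤ esymm n (k - 1) (Function.update μ i₀ 0) := by
  classical
  set T : Set (Fin n → ℝ) :=
    {μ | μ ∈ GammaK n k ∧ Pivot n k μ i₀ W ∧ μ i₀ = 1 ∧ ∀ w ∈ W, μ w ≤ 2} with hT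
  by_cases hne : T.Nonempty
  swap
  · refine ⟨1, one_pos, fun μ h1 h2 h3 h4 => ?_⟩
    exfalso
    exact hne ⟨μ, ⟨h1, h2, h3, h4⟩⟩
  obtain ⟨μ₁, hμ₁⟩ := hne
  have hW : i₀ ∉ W := hμ₁.2.1.1
  have hWc : W.card = k - 1 := hμ₁.2.1.2.1
  -- boundedness
  have hbd : ∀ μ ∈ T, ∀ i, |μ i| ≤ 2 * n := by
    rintro μ ⟨hG, hp, h0, h2b⟩ i
    have hlow := pivot_lower (by omega) hG hp i
    rw [h0, mul_one] at hlow
    have hup : μ i ≤ 2 := by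
      by_cases hiW : i ∈ W
      · exact h2b i hiW
      · by_cases hii : i = i₀
        · subst hii; rw [h0]; norm_num
        · have := hp.2.2.2 i hiW hii
          rw [h0] at this
          linarith
    have hn2 : (2 : ℝ) ≤ 2 * n := by
      have : (1 : ℝ) ≤ (n : ℝ) := by exact_mod_cast Nat.one_le_iff_ne_zero.mpr (by omega)
      nlinarith
    rw [abs_le]
    constructor <;> nlinarith
  have hTsub : T ⊆ Metric.closedBall (0 : Fin n → ℝ) (2 * n) := by
    intro μ hμ
    rw [Metric.mem_closedBall, dist_zero_right]
    rw [pi_norm_le_iff_of_nonneg (by positivity)]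
    intro i
    rw [Real.norm_eq_abs]
    exact hbd μ hμ i
  have hScomp : IsCompact (closure T) := by
    apply Metric.isCompact_of_isClosed_isBounded isClosed_closure
    have : closure T ⊆ Metric.closedBall (0 : Fin n → ℝ) (2 * n) :=
      closure_minimal hTsub Metric.isClosed_closedBall
    exact Metric.isBounded_closedBall.subset this
  set f : (Fin n → ℝ) → ℝ := fun μ => esymm n (k - 1) (Function.update μ i₀ 0) with hf
  have hfc : Continuous f := (cont_esymm n (k - 1)).comp (cont_update n i₀)
  obtain ⟨μs, hμsS, hmin'⟩ := hScomp.exists_isMinOn ⟨μ₁, subset_closure hμ₁⟩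
    hfc.continuousOn
  have hmin : ∀ y ∈ closure T, f μs ≤ f y := fun y hy => hmin' hy
  -- positivity at the minimizer, via CL
  have hpos : 0 < f μs := by
    apply CL n k hk2 hkn μs i₀ W hW hWc
    · intro w hw
      have : ∀ x ∈ T, 0 ≤ x w - 1 := by
        rintro x ⟨hG, hp, h0, -⟩
        have := hp.2.2.1 w hw
        rw [h0] at this
        linarith
      have := closure_nonneg (by continuity) this μs hμsS
      linarith
    · apply closure_eq_one (fun x hx => hx.2.2.1) μs hμsS
    · intro j hj1 hj2
      apply closure_nonneg (cont_esymm n j) _ μs hμsS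
      rintro x ⟨hG, -, -, -⟩
      exact le_of_lt (hG j hj1 hj2)
    · intro j hj1 hj2
      apply closure_nonneg ((cont_esymm n j).comp (cont_update n i₀)) _ μs hμsS
      rintro x ⟨hG, -, -, -⟩
      have := update_mem_gammaK k n x hG i₀
      exact le_of_lt (this j hj1 hj2)
  refine ⟨f μs, hpos, fun μ h1 h2 h3 h4 => ?_⟩
  exact hmin μ (subset_closure ⟨h1, h2, h3, h4⟩)




open Finset Polynomial

-- (Pivot already defined)

lemma update_smul {n : ℕ} (c : ℝ) (lam : Fin n → ℝ) (i₀ : Fin n) :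
    Function.update (fun i => c * lam i) i₀ 0
      = fun i => c * (Function.update lam i₀ 0 i) := by
  funext i
  by_cases h : i = i₀
  · subst h; simp
  · rw [Function.update_of_ne h, Function.update_of_ne h]

set_option maxHeartbeats 2000000 in
theorem main : ∀ k : ℕ, 1 ≤ k → ∀ n : ℕ, k ≤ n → ∃ c : ℝ, 0 < c ∧
    ∀ (lam : Fin n → ℝ) (i₀ : Fin n) (W : Finset (Fin n)),
      lam ∈ GammaK n k → Pivot n k lam i₀ W →
        c * esymm n (k - 1) lam ≤ esymm n (k - 1) (Function.update lam i₀ 0) := by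
  intro k
  induction k with
  | zero => omega
  | succ k ih =>
    intro _ n hn
    rcases Nat.eq_zero_or_pos k with hk0 | hk1
    · subst hk0
      refine ⟨1, one_pos, fun lam i₀ W _ _ => ?_⟩
      simp only [Nat.sub_self]
      rw [esymm_zero', esymm_zero']
      norm_num
    -- K := k+1 ≥ 2
    obtain ⟨c', hc'pos, hIH⟩ := ih hk1 n (by omega)
    set C'' : ℝ := max ((1 - c') / c') 0 with hC''
    have hC''nn : 0 ≤ C'' := le_max_right _ _
    set Ceasy : ℝ := 1 + 2 * (1 + C'') with hCeasy
    have hCeasypos : 0 < Ceasy := by positivity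
    set B : ℝ := (n.choose k : ℝ) * (2 * n) ^ k with hB
    have hBpos : 0 < B := by
      apply mul_pos
      · exact_mod_cast Nat.choose_pos (by omega : k ≤ n)
      · have : (0 : ℝ) < n := by exact_mod_cast (by omega : 0 < n)
        positivity
    have hcomp : ∀ p : Fin n × Finset (Fin n), ∃ c : ℝ, 0 < c ∧
        ∀ μ : Fin n → ℝ, μ ∈ GammaK n (k + 1) → Pivot n (k + 1) μ p.1 p.2 → μ p.1 = 1 →
          (∀ w ∈ p.2, μ w ≤ 2) →
            c ≤ esymm n (k + 1 - 1) (Function.update μ p.1 0) :=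
      fun p => comp_bound n (k + 1) (by omega) hn p.1 p.2
    choose cw hcwpos hcw using hcomp
    have hnefin : Nonempty (Fin n) := ⟨⟨0, by omega⟩⟩
    have hPairNe : (Finset.univ : Finset (Fin n × Finset (Fin n))).Nonempty :=
      Finset.univ_nonempty
    set ccomp : ℝ := Finset.univ.inf' hPairNe (fun p => cw p / B) with hccomp
    have hccomppos : 0 < ccomp := by
      rw [hccomp, Finset.lt_inf'_iff]
      exact fun p _ => div_pos (hcwpos p) hBpos
    refine ⟨min (1 / Ceasy) ccomp, lt_min (by positivity) hccomppos, ?_⟩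
    intro lam i₀ W hG hp
    simp only [Nat.add_sub_cancel]
    set c := min (1 / Ceasy) ccomp with hc
    have hcpos : 0 < c := lt_min (by positivity) hccomppos
    have ht : 0 < lam i₀ := pivot_t_pos (by omega) hG hp
    set t := lam i₀ with hts
    have hWc : W.card = k := by
      have := hp.2.1; omega
    have hWne : W.Nonempty := Finset.card_pos.mp (by omega)
    obtain ⟨m₁, hm₁W, hm₁max⟩ := Finset.exists_max_image W lam hWne
    have hm₁i₀ : m₁ ≠ i₀ := fun h => hp.1 (h ▸ hm₁W)
    have htm : t ≤ lam m₁ := hp.2.2.1 m₁ hm₁W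
    set ν := Function.update lam i₀ 0 with hν
    set ρ := Function.update lam m₁ 0 with hρ
    set D := Function.update ρ i₀ 0 with hD
    have hρG : ρ ∈ GammaK n k := by
      have := update_mem_gammaK (k + 1) n lam hG m₁
      simpa using this
    have hDG : D ∈ GammaK n (k - 1) := update_mem_gammaK k n ρ hρG i₀
    have hρi₀ : ρ i₀ = t := Function.update_of_ne (Ne.symm hm₁i₀) _ _
    have hνm₁ : ν m₁ = lam m₁ := Function.update_of_ne hm₁i₀ _ _
    have hupdcomm : Function.update ν m₁ 0 = D := by
      rw [hν, hD, hρ]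
      exact Function.update_comm (Ne.symm hm₁i₀) _ _ _
    -- key positive quantities
    have hD1pos : 0 < esymm n (k - 1) D := gamma_pos hDG (k - 1) le_rfl
    -- E2 facts at level k
    have E2lam : esymm n (k + 1) lam = esymm n (k + 1) ν + t * esymm n k ν := by
      have := esymm_update n k lam i₀
      rw [← hν, ← hts] at this
      exact this
    have E2ν : esymm n k ν = esymm n k D + lam m₁ * esymm n (k - 1) D := by
      obtain ⟨k', rfl⟩ : ∃ k', k = k' + 1 := ⟨k - 1, by omega⟩
      have := esymm_update n k' ν m₁
      rw [hupdcomm, hνm₁] at this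
      simpa using this
    have E2ρ : esymm n k ρ = esymm n k D + t * esymm n (k - 1) D := by
      obtain ⟨k', rfl⟩ : ∃ k', k = k' + 1 := ⟨k - 1, by omega⟩
      have := esymm_update n k' ρ i₀
      rw [← hD, hρi₀] at this
      simpa using this
    have hρpos : 0 < esymm n k ρ := gamma_pos hρG k le_rfl
    -- (4) : esymm n k ν ≥ (lam m₁ - t) * esymm n (k-1) D
    have step4 : (lam m₁ - t) * esymm n (k - 1) D ≤ esymm n k ν := by
      nlinarith [E2ν, E2ρ, hρpos]
    -- (3') : t * esymm n (k-1) ν ≤ (1 + C'') * lam m₁ * esymm n (k-1) D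
    have step3 : t * esymm n (k - 1) ν ≤ (1 + C'') * (lam m₁ * esymm n (k - 1) D) := by
      rcases Nat.eq_zero_or_pos (k - 1) with hz | hk2'
      · rw [hz, esymm_zero', esymm_zero'] at *
        nlinarith
      · obtain ⟨k', hk'⟩ : ∃ k', k = k' + 2 := ⟨k - 2, by omega⟩
        -- ratio from IH : t * esymm n (k-2) D ≤ C'' * esymm n (k-1) D
        have hpivρ : Pivot n k ρ i₀ (W.erase m₁) := by
          refine ⟨fun h => hp.1 (Finset.mem_of_mem_erase h), ?_, ?_, ?_⟩
          · rw [Finset.card_erase_of_mem hm₁W, hWc]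
          · intro w hw
            have hwm₁ : w ≠ m₁ := (Finset.mem_erase.mp hw).1
            have hwW : w ∈ W := Finset.mem_of_mem_erase hw
            rw [hρi₀, hρ, Function.update_of_ne hwm₁]
            exact hp.2.2.1 w hwW
          · intro i hi hii₀
            rw [hρi₀]
            by_cases him : i = m₁
            · subst him
              rw [hρ, Function.update_self]
              exact le_of_lt ht
            · have hiW : i ∉ W := by
                intro hiW
                exact hi (Finset.mem_erase.mpr ⟨him, hiW⟩)
              rw [hρ, Function.update_of_ne him]
              exact hp.2.2.2 i hiW hii₀
        have hIHρ := hIH ρ i₀ (W.erase m₁) hρG hpivρ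
        have E2ρ' : esymm n (k - 1) ρ = esymm n (k - 1) D + t * esymm n (k - 2) D := by
          have := esymm_update n (k - 2) ρ i₀
          rw [← hD, hρi₀] at this
          have harith : k - 2 + 1 = k - 1 := by omega
          rw [harith] at this
          exact this
        have hD2pos : 0 < esymm n (k - 2) D := gamma_pos hDG (k - 2) (by omega)
        have hratio : t * esymm n (k - 2) D ≤ C'' * esymm n (k - 1) D := by
          have h1 : c' * (esymm n (k - 1) D + t * esymm n (k - 2) D)
              ≤ esymm n (k - 1) D := by
            rw [← E2ρ']; exact hIHρ
          have h2 : t * esymm n (k - 2) D ≤ ((1 - c') / c') * esymm n (k - 1) D := by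
            rw [div_mul_eq_mul_div, le_div_iff₀ hc'pos]
            nlinarith
          apply le_trans h2
          apply mul_le_mul_of_nonneg_right (le_max_left _ _) (le_of_lt hD1pos)
        -- (1) : esymm n (k-1) ν = esymm n (k-1) D + lam m₁ * esymm n (k-2) D
        have E2ν' : esymm n (k - 1) ν = esymm n (k - 1) D + lam m₁ * esymm n (k - 2) D := by
          have := esymm_update n (k - 2) ν m₁
          rw [hupdcomm, hνm₁] at this
          have harith : k - 2 + 1 = k - 1 := by omega
          rw [harith] at this
          exact this
        rw [E2ν']
        have ht' : 0 < lam m₁ := lt_of_lt_of_le ht htm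
        have hA : t * esymm n (k - 1) D ≤ lam m₁ * esymm n (k - 1) D :=
          mul_le_mul_of_nonneg_right htm hD1pos.le
        have hBt : lam m₁ * (t * esymm n (k - 2) D)
            ≤ lam m₁ * (C'' * esymm n (k - 1) D) :=
          mul_le_mul_of_nonneg_left hratio ht'.le
        calc t * (esymm n (k - 1) D + lam m₁ * esymm n (k - 2) D)
            = t * esymm n (k - 1) D + lam m₁ * (t * esymm n (k - 2) D) := by ring
          _ ≤ lam m₁ * esymm n (k - 1) D + lam m₁ * (C'' * esymm n (k - 1) D) :=
              add_le_add hA hBt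
          _ = (1 + C'') * (lam m₁ * esymm n (k - 1) D) := by ring
    -- now case split
    have hlamK1pos : 0 < esymm n (k + 1) lam := hG (k + 1) (by omega) le_rfl
    have hlamKpos : 0 < esymm n k lam := hG k (by omega) (by omega)
    by_cases hcase : 2 * t ≤ lam m₁
    · -- easy case
      have step5 : t * esymm n (k - 1) ν ≤ 2 * (1 + C'') * esymm n k ν := by
        have h1 : (lam m₁ / 2) * esymm n (k - 1) D ≤ esymm n k ν := by
          have h2 : lam m₁ / 2 ≤ lam m₁ - t := by linarith
          exact le_trans (mul_le_mul_of_nonneg_right h2 hD1pos.le) step4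
        calc t * esymm n (k - 1) ν ≤ (1 + C'') * (lam m₁ * esymm n (k - 1) D) := step3
          _ = 2 * (1 + C'') * ((lam m₁ / 2) * esymm n (k - 1) D) := by ring
          _ ≤ 2 * (1 + C'') * esymm n k ν := by
              apply mul_le_mul_of_nonneg_left h1 (by positivity)
      -- esymm n k lam = esymm n k ν + t * esymm n (k-1) ν
      have E2lam' : esymm n k lam = esymm n k ν + t * esymm n (k - 1) ν := by
        obtain ⟨k', rfl⟩ : ∃ k', k = k' + 1 := ⟨k - 1, by omega⟩
        have := esymm_update n k' lam i₀
        rw [← hν, ← hts] at this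
        have harith : k' + 1 - 1 = k' := by omega
        rw [harith]
        exact this
      have hfinal : esymm n k lam ≤ Ceasy * esymm n k ν := by
        rw [E2lam', hCeasy]
        calc esymm n k ν + t * esymm n (k - 1) ν
            ≤ esymm n k ν + 2 * (1 + C'') * esymm n k ν := by linarith [step5]
          _ = (1 + 2 * (1 + C'')) * esymm n k ν := by ring
      have hνpos : 0 < esymm n k ν := by
        by_contra hcon
        push_neg at hcon
        have h2 : Ceasy * esymm n k ν ≤ 0 :=
          mul_nonpos_of_nonneg_of_nonpos hCeasypos.le hcon
        linarith
      calc c * esymm n k lam ≤ (1 / Ceasy) * esymm n k lam := by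
            apply mul_le_mul_of_nonneg_right (min_le_left _ _) (le_of_lt hlamKpos)
        _ ≤ esymm n k ν := by
            rw [div_mul_eq_mul_div, one_mul, div_le_iff₀ hCeasypos]
            calc esymm n k lam ≤ Ceasy * esymm n k ν := hfinal
              _ = esymm n k ν * Ceasy := by ring
    · -- comparable case
      push_neg at hcase
      set μ : Fin n → ℝ := fun i => (1 / t) * lam i with hμ
      have htinv : 0 < 1 / t := by positivity
      have hμG : μ ∈ GammaK n (k + 1) := by
        intro j hj1 hj2
        rw [hμ, esymm_smul]
        exact mul_pos (by positivity) (hG j hj1 hj2)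
      have hμi₀ : μ i₀ = 1 := by
        show (1 / t) * lam i₀ = 1
        rw [← hts]
        field_simp
      have hpivμ : Pivot n (k + 1) μ i₀ W := by
        refine ⟨hp.1, hp.2.1, fun w hw => ?_, fun i hi hii => ?_⟩
        · rw [hμ]
          exact mul_le_mul_of_nonneg_left (hp.2.2.1 w hw) (le_of_lt htinv)
        · rw [hμ]
          exact mul_le_mul_of_nonneg_left (hp.2.2.2 i hi hii) (le_of_lt htinv)
      have hμW2 : ∀ w ∈ W, μ w ≤ 2 := by
        intro w hw
        show (1 / t) * lam w ≤ 2
        have h1 : lam w ≤ lam m₁ := hm₁max w hw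
        have h2 : lam w ≤ 2 * t := by linarith
        calc (1 / t) * lam w ≤ (1 / t) * (2 * t) :=
              mul_le_mul_of_nonneg_left h2 htinv.le
          _ = 2 := by field_simp
      have hcwb := hcw (i₀, W) μ hμG hpivμ hμi₀ hμW2
      simp only [Nat.add_sub_cancel] at hcwb
      -- esymm n k (update μ i₀ 0) = (1/t)^k * esymm n k ν
      have hscale : esymm n k (Function.update μ i₀ 0) = (1 / t) ^ k * esymm n k ν := by
        rw [hμ, update_smul, esymm_smul, hν]
      have hlower : cw (i₀, W) * t ^ k ≤ esymm n k ν := by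
        have h1 : cw (i₀, W) ≤ (1 / t) ^ k * esymm n k ν := by
          rw [← hscale]; exact hcwb
        have h2 : (0 : ℝ) < t ^ k := by positivity
        calc cw (i₀, W) * t ^ k ≤ ((1 / t) ^ k * esymm n k ν) * t ^ k :=
              mul_le_mul_of_nonneg_right h1 (le_of_lt h2)
          _ = esymm n k ν := by
              rw [one_div_pow, mul_comm, ← mul_assoc, mul_one_div_cancel h2.ne', one_mul]
      -- upper bound on esymm n k lam
      have hμbd : ∀ i, |μ i| ≤ 2 * n := by
        intro i
        have hlow := pivot_lower (by omega) hμG hpivμ i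
        rw [hμi₀, mul_one] at hlow
        have hup : μ i ≤ 2 := by
          by_cases hiW : i ∈ W
          · exact hμW2 i hiW
          · by_cases hii : i = i₀
            · subst hii; rw [hμi₀]; norm_num
            · have := hpivμ.2.2.2 i hiW hii
              rw [hμi₀] at this
              linarith
        have hn2 : (2 : ℝ) ≤ 2 * n := by
          have : (1 : ℝ) ≤ (n : ℝ) := by exact_mod_cast (by omega : 1 ≤ n)
          nlinarith
        have hnn : (1 : ℝ) ≤ (n : ℝ) := by exact_mod_cast (by omega : 1 ≤ n)
        rw [abs_le]
        constructor <;> nlinarith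
    -- upper bound
      have hupper : esymm n k lam ≤ t ^ k * B := by
        have h1 : esymm n k μ ≤ B := by
          have h2 := abs_esymm_le n k μ (2 * n) (by positivity) hμbd
          calc esymm n k μ ≤ |esymm n k μ| := le_abs_self _
            _ ≤ B := by rw [hB]; exact h2
        have h3 : esymm n k lam = t ^ k * esymm n k μ := by
          have h4 : esymm n k μ = (1 / t) ^ k * esymm n k lam := by
            rw [hμ, esymm_smul]
          rw [h4]
          field_simp
          rw [← mul_pow, mul_one_div_cancel ht.ne', one_pow]
        rw [h3]
        exact mul_le_mul_of_nonneg_left h1 (by positivity)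
      -- combine
      have hcle : c ≤ cw (i₀, W) / B := by
        calc c ≤ ccomp := min_le_right _ _
          _ ≤ cw (i₀, W) / B := Finset.inf'_le _ (Finset.mem_univ (i₀, W))
      calc c * esymm n k lam ≤ (cw (i₀, W) / B) * esymm n k lam :=
            mul_le_mul_of_nonneg_right hcle (le_of_lt hlamKpos)
        _ ≤ (cw (i₀, W) / B) * (t ^ k * B) := by
            exact mul_le_mul_of_nonneg_left hupper
              (div_nonneg (hcwpos _).le hBpos.le)
        _ = cw (i₀, W) * t ^ k := by
            field_simp [hBpos.ne']
        _ ≤ esymm n k ν := hlower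


end Aux

theorem stmt2 (n k : ℕ) (hk1 : 1 ≤ k) (hkn : k ≤ n) :
    ∃ c : ℝ, 0 < c ∧
      ∀ lam : Fin n → ℝ, lam ∈ GammaK n k → Monotone lam →
        0 < lam ⟨n - k, by omega⟩ ∧
        c * esymm n (k - 1) lam
          ≤ esymm n (k - 1) (Function.update lam ⟨n - k, by omega⟩ 0) := by
  obtain ⟨c, hcpos, hmain⟩ := Aux.main k hk1 n hkn
  refine ⟨c, hcpos, fun lam hG hMono => ?_⟩
  set i₀ : Fin n := ⟨n - k, by omega⟩ with hi₀
  set W : Finset (Fin n) := Finset.Ioi i₀ with hW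
  have hpiv : Aux.Pivot n k lam i₀ W := by
    refine ⟨by simp [hW], ?_, ?_, ?_⟩
    · rw [hW, Fin.card_Ioi]
      show n - 1 - (n - k) = k - 1
      omega
    · intro w hw
      exact hMono (le_of_lt (Finset.mem_Ioi.mp hw))
    · intro i hi hii
      have h2 : ¬ i₀ < i := fun h => hi (Finset.mem_Ioi.mpr h)
      exact hMono (le_of_not_gt h2)
  exact ⟨Aux.pivot_t_pos hk1 hG hpiv, hmain lam i₀ W hG hpiv⟩
end

section
/- Let 0 ≤ l < k ≤ n. There exists a constant c > 0 depending only on n, k, l such that for every λ ∈ Γ_k, Σ_{j=1}^{n} G^{jj}(λ) ≥ (n−k+1)(1 − l/k) · σ_{k−1}(λ)/σ_l(λ) ≥ c · (σ_k(λ)/σ_l(λ))^{1 − 1/(k−l)}. -/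
/- ===== auxiliary lemmas ===== -/


open Finset

lemma sq_sum_expand {ι : Type*} [DecidableEq ι] (s : Finset ι) (g : ι → ℝ) :
    (∑ i ∈ s, g i) ^ 2 = ∑ i ∈ s, g i ^ 2 + 2 * ∑ T ∈ s.powersetCard 2, ∏ i ∈ T, g i := by
  induction s using Finset.induction_on with
  | empty =>
    have : (∅ : Finset ι).powersetCard 2 = ∅ := by simp
    simp [this]
  | @insert a s ha ih =>
    rw [Finset.sum_insert ha, Finset.sum_insert ha,
      show (2:ℕ) = Nat.succ 1 from rfl, Finset.powersetCard_succ_insert ha,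
      Finset.sum_union, Finset.sum_image]
    · have h1 : ∑ T ∈ s.powersetCard 1, ∏ i ∈ insert a T, g i
          = g a * ∑ i ∈ s, g i := by
        rw [Finset.powersetCard_one, Finset.sum_map, Finset.mul_sum]
        refine Finset.sum_congr rfl fun i hi => ?_
        have hai : a ∉ ({i} : Finset ι) := by
          simp only [Finset.mem_singleton]
          rintro rfl; exact ha hi
        simp [Finset.prod_insert hai]
      rw [h1]; ring_nf
      nlinarith [ih]
    · intro T hT U hU hTU
      have hTa : a ∉ T := fun h => ha ((Finset.mem_powersetCard.1 hT).1 h)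
      have hUa : a ∉ U := fun h => ha ((Finset.mem_powersetCard.1 hU).1 h)
      have := congrArg (Finset.erase · a) hTU
      simpa [Finset.erase_insert hTa, Finset.erase_insert hUa] using this
    · refine Finset.disjoint_left.2 fun T hT hT' => ?_
      have hTa : a ∉ T := fun h => ha ((Finset.mem_powersetCard.1 hT).1 h)
      obtain ⟨U, hU, rfl⟩ := Finset.mem_image.1 hT'
      exact hTa (Finset.mem_insert_self a U)

lemma sum_powersetCard_compl {D m : ℕ} (hm : m ≤ D) (g : Finset (Fin D) → ℝ) :
    ∑ S ∈ (Finset.univ : Finset (Fin D)).powersetCard m, g S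
      = ∑ S ∈ (Finset.univ : Finset (Fin D)).powersetCard (D - m), g Sᶜ := by
  refine Finset.sum_nbij' (fun S => Sᶜ) (fun S => Sᶜ) ?_ ?_ ?_ ?_ ?_
  · intro S hS
    rw [Finset.mem_powersetCard_univ] at hS ⊢
    rw [Finset.card_compl, hS, Fintype.card_fin]
  · intro S hS
    rw [Finset.mem_powersetCard_univ] at hS ⊢
    rw [Finset.card_compl, hS, Fintype.card_fin]
    omega
  · intro S _; simp
  · intro S _; simp
  · intro S _; simp

lemma esymm_top {D : ℕ} (f : Fin D → ℝ) : esymm D D f = ∏ i, f i := by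
  unfold esymm
  have : (Finset.univ : Finset (Fin D)).powersetCard D = {Finset.univ} := by
    have := Finset.powersetCard_self (Finset.univ : Finset (Fin D))
    simpa using this
  rw [this, Finset.sum_singleton]

lemma esymm_pred {D : ℕ} (hD : 1 ≤ D) (f : Fin D → ℝ) :
    esymm D (D - 1) f = ∑ i, ∏ j ∈ Finset.univ.erase i, f j := by
  unfold esymm
  rw [sum_powersetCard_compl (by omega)]
  have h1 : D - (D - 1) = 1 := by omega
  rw [h1, Finset.powersetCard_one, Finset.sum_map]
  refine Finset.sum_congr rfl fun i _ => ?_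
  refine Finset.prod_congr ?_ fun _ _ => rfl
  ext a; simp [eq_comm, Ne]

lemma prod_P_pair {D : ℕ} (f : Fin D → ℝ) {T : Finset (Fin D)} (hT : T.card = 2) :
    ∏ t ∈ T, (∏ j ∈ Finset.univ.erase t, f j) = (∏ i, f i) * ∏ i ∈ Tᶜ, f i := by
  obtain ⟨i, j, hij, rfl⟩ := Finset.card_eq_two.1 hT
  have hcompl : ({i, j} : Finset (Fin D))ᶜ = (Finset.univ.erase i).erase j := by
    ext a; simp [Finset.mem_compl, Finset.mem_erase]; tauto
  have hji : j ∈ Finset.univ.erase i := by simp [hij.symm]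
  have hij' : i ∈ Finset.univ.erase j := by simp [hij]
  have e1 : ∏ x ∈ Finset.univ.erase i, f x
      = f j * ∏ x ∈ (Finset.univ.erase i).erase j, f x :=
    (Finset.mul_prod_erase _ f hji).symm
  have e2 : ∏ x ∈ Finset.univ.erase j, f x
      = f i * ∏ x ∈ (Finset.univ.erase j).erase i, f x :=
    (Finset.mul_prod_erase _ f hij').symm
  have e3 : ∏ x, f x = f i * ∏ x ∈ Finset.univ.erase i, f x :=
    (Finset.mul_prod_erase _ f (Finset.mem_univ i)).symm
  have ecomm : (Finset.univ.erase j).erase i = (Finset.univ.erase i).erase j := by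
    ext a; simp [Finset.mem_erase]; tauto
  rw [Finset.prod_pair hij, hcompl, e1, e2, ecomm, e3, e1]
  ring

lemma esymm_master {D : ℕ} (hD : 2 ≤ D) (f : Fin D → ℝ) :
    2 * D * (esymm D D f * esymm D (D - 2) f)
      ≤ ((D : ℝ) - 1) * (esymm D (D - 1) f) ^ 2 := by
  set P : Fin D → ℝ := fun i => ∏ j ∈ Finset.univ.erase i, f j with hP
  have h1 : esymm D (D - 1) f = ∑ i, P i := esymm_pred (by omega) f
  have h2 : esymm D D f * esymm D (D - 2) f
      = ∑ T ∈ (Finset.univ : Finset (Fin D)).powersetCard 2, ∏ i ∈ T, P i := by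
    have hm2 : esymm D (D - 2) f
        = ∑ T ∈ (Finset.univ : Finset (Fin D)).powersetCard 2, ∏ i ∈ Tᶜ, f i := by
      unfold esymm
      rw [sum_powersetCard_compl (by omega) (g := fun S => ∏ i ∈ S, f i)]
      have h22 : D - (D - 2) = 2 := by omega
      rw [h22]
    rw [hm2, esymm_top, Finset.mul_sum]
    refine Finset.sum_congr rfl fun T hT => ?_
    exact (prod_P_pair f (Finset.mem_powersetCard_univ.1 hT)).symm
  have h3 : (∑ i, P i) ^ 2 = ∑ i, P i ^ 2
      + 2 * ∑ T ∈ (Finset.univ : Finset (Fin D)).powersetCard 2, ∏ i ∈ T, P i :=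
    sq_sum_expand Finset.univ P
  have h4 : (∑ i, P i) ^ 2 ≤ (D : ℝ) * ∑ i, P i ^ 2 := by
    have := sq_sum_le_card_mul_sum_sq (s := (Finset.univ : Finset (Fin D))) (f := P)
    simpa using this
  rw [h1, h2]
  nlinarith [h3, h4]

lemma multiset_to_fin (s : Multiset ℝ) {D : ℕ} (hD : Multiset.card s = D) :
    ∃ f : Fin D → ℝ, Multiset.map f Finset.univ.val = s ∧
      ∀ j, s.esymm j = esymm D j f := by
  have hlen : s.toList.length = D := by rw [Multiset.length_toList, hD]
  refine ⟨fun i => s.toList.get (Fin.cast hlen.symm i), ?_, ?_⟩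
  · rw [Fin.univ_val_map]
    have : List.ofFn (fun i : Fin D => s.toList.get (Fin.cast hlen.symm i)) = s.toList := by
      apply List.ext_get
      · simp [hlen]
      · intro i h1 h2
        simp [List.get_ofFn]
    rw [this, Multiset.coe_toList]
  · intro j
    rw [show s.esymm j = ((Finset.univ.val.map
        (fun i : Fin D => s.toList.get (Fin.cast hlen.symm i))).esymm j) from ?_]
    · exact Finset.esymm_map_val _ _ j
    · congr 1
      rw [Fin.univ_val_map]
      have : List.ofFn (fun i : Fin D => s.toList.get (Fin.cast hlen.symm i)) = s.toList := by
        apply List.ext_get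
        · simp [hlen]
        · intro i h1 h2
          simp [List.get_ofFn]
      rw [this, Multiset.coe_toList]

lemma multiset_master (s : Multiset ℝ) {D : ℕ} (hD : Multiset.card s = D) (h2 : 2 ≤ D) :
    2 * D * (s.esymm D * s.esymm (D - 2)) ≤ ((D : ℝ) - 1) * (s.esymm (D - 1)) ^ 2 := by
  obtain ⟨f, -, hes⟩ := multiset_to_fin s hD
  rw [hes, hes, hes]
  exact esymm_master h2 f

lemma df1 (r : ℕ) : (1 + r).descFactorial r = (r + 1).factorial := by
  induction r with
  | zero => rfl
  | succ r ih =>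
    have : 1 + (r + 1) = (1 + r) + 1 := by omega
    rw [this, Nat.succ_descFactorial_succ, ih, Nat.factorial_succ (r + 1)]
    have h2 : 1 + r + 1 = r + 1 + 1 := by omega
    rw [h2]

lemma df2 (r : ℕ) : (2 + r).descFactorial r * 2 = (r + 2).factorial := by
  induction r with
  | zero => rfl
  | succ r ih =>
    have : 2 + (r + 1) = (2 + r) + 1 := by omega
    rw [this, Nat.succ_descFactorial_succ, Nat.mul_assoc, ih,
      show r + 1 + 2 = (r + 2) + 1 from by omega, Nat.factorial_succ (r + 2)]
    have h2 : 2 + r + 1 = r + 2 + 1 := by omega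
    rw [h2]

open Polynomial in
lemma rr_derivative {p : ℝ[X]} (hp : Multiset.card p.roots = p.natDegree) :
    Multiset.card (derivative p).roots = (derivative p).natDegree ∧
      (derivative p).natDegree = p.natDegree - 1 := by
  by_cases h0 : p.natDegree = 0
  · have hd : derivative p = 0 := by
      rw [Polynomial.eq_C_of_natDegree_eq_zero h0]; simp
    rw [hd, h0]; simp
  · have hpne : p ≠ 0 := fun h => h0 (by simp [h])
    have hlc : p.coeff p.natDegree ≠ 0 := by
      rw [← Polynomial.leadingCoeff]
      exact Polynomial.leadingCoeff_ne_zero.2 hpne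
    have hco : (derivative p).coeff (p.natDegree - 1) ≠ 0 := by
      rw [Polynomial.coeff_derivative, show p.natDegree - 1 + 1 = p.natDegree from by omega]
      apply mul_ne_zero hlc
      have : (0:ℝ) < ((p.natDegree - 1 : ℕ) : ℝ) + 1 := by positivity
      exact ne_of_gt this
    have hdeg_ge : p.natDegree - 1 ≤ (derivative p).natDegree :=
      Polynomial.le_natDegree_of_ne_zero hco
    have hdeg_le : (derivative p).natDegree ≤ p.natDegree - 1 :=
      Polynomial.natDegree_derivative_le p
    have hdeg : (derivative p).natDegree = p.natDegree - 1 := le_antisymm hdeg_le hdeg_ge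
    have h1 : Multiset.card (derivative p).roots ≤ (derivative p).natDegree :=
      Polynomial.card_roots' _
    have h2 := Polynomial.card_roots_le_derivative p
    exact ⟨by omega, hdeg⟩

open Polynomial in
lemma rr_iterate (p : ℝ[X]) (hp : Multiset.card p.roots = p.natDegree) (r : ℕ) :
    Multiset.card (derivative^[r] p).roots = (derivative^[r] p).natDegree ∧
      (derivative^[r] p).natDegree = p.natDegree - r := by
  induction r with
  | zero => exact ⟨hp, by simp⟩
  | succ r ih =>
    obtain ⟨ih1, ih2⟩ := ih
    rw [Function.iterate_succ_apply']
    obtain ⟨h1, h2⟩ := rr_derivative ih1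
    exact ⟨h1, by omega⟩

open Polynomial in
lemma newton_core (t r : ℕ) (lam : Fin (t + 2 + r) → ℝ) :
    ((t:ℝ) + 2) * ((r:ℝ) + 2) * (esymm (t + 2 + r) t lam * esymm (t + 2 + r) (t + 2) lam)
      ≤ ((t:ℝ) + 1) * ((r:ℝ) + 1) * (esymm (t + 2 + r) (t + 1) lam) ^ 2 := by
  have hn : t + 2 + r = t + 2 + r := rfl
  set m0 : Multiset ℝ := Multiset.map lam Finset.univ.val with hm0
  have hcard : Multiset.card m0 = t + 2 + r := by simp [hm0]
  set P : ℝ[X] := (m0.map fun a => X - C a).prod with hPdef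
  have hdegP : P.natDegree = t + 2 + r := by
    rw [hPdef, Polynomial.natDegree_multiset_prod_X_sub_C_eq_card, hcard]
  have hrootsP : P.roots = m0 := Polynomial.roots_multiset_prod_X_sub_C m0
  have hrrP : Multiset.card P.roots = P.natDegree := by rw [hrootsP, hcard, hdegP]
  have hesymmP : ∀ j, m0.esymm j = esymm (t + 2 + r) j lam := fun j =>
    Finset.esymm_map_val lam Finset.univ j
  have hPcoeff : ∀ i, i ≤ t + 2 + r → P.coeff i = (-1)^(t + 2 + r - i) * esymm (t + 2 + r) (t + 2 + r - i) lam := by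
    intro i hi
    rw [hPdef, Multiset.prod_X_sub_C_coeff m0 (by rw [hcard]; exact hi), hcard, hesymmP]
  set q : ℝ[X] := derivative^[r] P with hq
  obtain ⟨hrrq, hdegq⟩ := rr_iterate P hrrP r
  have hD : q.natDegree = t + 2 := by rw [hdegq, hdegP]; omega
  have hsr : Multiset.card q.roots = t + 2 := by rw [hrrq, hD]
  have hsplit : Splits q := (Polynomial.splits_iff_card_roots).2 hrrq
  have hqeq : q = C q.leadingCoeff * (q.roots.map fun a => X - C a).prod :=
    hsplit.eq_prod_roots
  have hqne : q ≠ 0 := fun h => by rw [h] at hD; simp at hD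
  have hLne : q.leadingCoeff ≠ 0 := Polynomial.leadingCoeff_ne_zero.2 hqne
  set L := q.leadingCoeff with hL
  set a0 := (q.roots).esymm (t + 2) with ha0
  set a1 := (q.roots).esymm (t + 1) with ha1
  set a2 := (q.roots).esymm t with ha2
  have hqc : ∀ i, i ≤ t + 2 →
      q.coeff i = L * ((-1)^(t + 2 - i) * (q.roots).esymm (t + 2 - i)) := by
    intro i hi
    conv_lhs => rw [hqeq]
    rw [Polynomial.coeff_C_mul, Multiset.prod_X_sub_C_coeff _ (by rw [hsr]; exact hi), hsr]
  have hqd : ∀ i, q.coeff i = ((i + r).descFactorial r : ℝ) * P.coeff (i + r) := by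
    intro i
    rw [hq, Polynomial.coeff_iterate_derivative, nsmul_eq_mul]
  set A := esymm (t + 2 + r) t lam with hA
  set B := esymm (t + 2 + r) (t + 1) lam with hB
  set Cv := esymm (t + 2 + r) (t + 2) lam with hCv
  set E := (r.factorial : ℝ) with hE
  have hEpos : (0:ℝ) < E := by rw [hE]; exact_mod_cast r.factorial_pos
  -- the three coefficient equations
  have cancel : ∀ (s x y d : ℝ), s ≠ 0 → L * (s * x) = d * (s * y) → L * x = d * y := by
    intro s x y d hs h
    apply mul_left_cancel₀ hs
    linear_combination h
  have key0 : L * a0 = E * Cv := by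
    have h1 := hqc 0 (by omega)
    have h2 := hqd 0
    rw [hPcoeff (0 + r) (by omega)] at h2
    rw [h1] at h2
    have hidx : t + 2 + r - (0 + r) = t + 2 := by omega
    rw [hidx] at h2
    have hdf : ((0 + r).descFactorial r : ℝ) = E := by
      rw [hE]; norm_num [Nat.descFactorial_self]
    rw [hdf] at h2
    exact cancel ((-1:ℝ)^(t+2)) a0 Cv E (pow_ne_zero _ (by norm_num)) h2
  have key1 : L * a1 = ((r:ℝ) + 1) * E * B := by
    have h1 := hqc 1 (by omega)
    have h2 := hqd 1
    rw [hPcoeff (1 + r) (by omega)] at h2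
    rw [h1] at h2
    have hidx : t + 2 + r - (1 + r) = t + 1 := by omega
    have hidx2 : t + 2 - 1 = t + 1 := by omega
    rw [hidx, hidx2] at h2
    have hdf : ((1 + r).descFactorial r : ℝ) = ((r:ℝ) + 1) * E := by
      rw [hE, df1]
      push_cast [Nat.factorial_succ]
      ring
    rw [hdf] at h2
    exact cancel ((-1:ℝ)^(t+1)) a1 B (((r:ℝ) + 1) * E) (pow_ne_zero _ (by norm_num)) h2
  have key2 : 2 * (L * a2) = ((r:ℝ) + 2) * ((r:ℝ) + 1) * E * A := by
    have h1 := hqc 2 (by omega)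
    have h2 := hqd 2
    rw [hPcoeff (2 + r) (by omega)] at h2
    rw [h1] at h2
    have hidx : t + 2 + r - (2 + r) = t := by omega
    have hidx2 : t + 2 - 2 = t := by omega
    rw [hidx, hidx2] at h2
    have hdf : 2 * ((2 + r).descFactorial r : ℝ) = ((r:ℝ) + 2) * ((r:ℝ) + 1) * E := by
      rw [hE]
      have := df2 r
      have hc : (((2 + r).descFactorial r * 2 : ℕ) : ℝ) = (((r + 2).factorial : ℕ) : ℝ) := by
        exact_mod_cast congrArg (Nat.cast : ℕ → ℝ) this
      push_cast [Nat.factorial_succ] at hc ⊢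
      ring_nf at hc ⊢
      linarith
    have h5 := cancel ((-1:ℝ)^t) a2 A (((2 + r).descFactorial r : ℝ))
      (pow_ne_zero _ (by norm_num)) h2
    rw [h5]
    linear_combination A * hdf
  -- master inequality on roots of q
  have mm := multiset_master q.roots hsr (by omega)
  have hm2 : (t + 2) - 2 = t := by omega
  have hm1 : (t + 2) - 1 = t + 1 := by omega
  rw [hm2, hm1, ← ha0, ← ha1, ← ha2] at mm
  push_cast at mm
  -- multiply by L^2
  have key := mul_le_mul_of_nonneg_left mm (sq_nonneg L)
  have hc2pos : (0:ℝ) < 4 * (((r:ℝ) + 1) * E^2) := by positivity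
  refine le_of_mul_le_mul_right ?_ hc2pos
  calc ((t:ℝ) + 2) * ((r:ℝ) + 2) * (A * Cv) * (4 * (((r:ℝ) + 1) * E^2))
      = (2 * ((t:ℝ) + 2) * (E * Cv) * (((r:ℝ) + 2) * ((r:ℝ) + 1) * E * A)) * 2 := by ring
    _ = (2 * ((t:ℝ) + 2) * (L * a0) * (2 * (L * a2))) * 2 := by rw [key0, key2]
    _ = (L^2 * (2 * ((t:ℝ) + 2) * (a0 * a2))) * 4 := by ring
    _ ≤ (L^2 * ((((t:ℝ) + 2) - 1) * a1^2)) * 4 := by nlinarith [key]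
    _ = ((t:ℝ) + 1) * (L * a1)^2 * 4 := by ring
    _ = ((t:ℝ) + 1) * (((r:ℝ) + 1) * E * B)^2 * 4 := by rw [key1]
    _ = ((t:ℝ) + 1) * ((r:ℝ) + 1) * B ^ 2 * (4 * (((r:ℝ) + 1) * E^2)) := by ring

lemma newton_sigma (n m : ℕ) (h1 : 1 ≤ m) (h2 : m + 1 ≤ n) (lam : Fin n → ℝ) :
    ((m:ℝ) + 1) * (((n - m : ℕ) : ℝ) + 1) * (esymm n (m - 1) lam * esymm n (m + 1) lam)
      ≤ (m:ℝ) * ((n - m : ℕ) : ℝ) * (esymm n m lam) ^ 2 := by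
  obtain ⟨t, rfl⟩ : ∃ t, m = t + 1 := ⟨m - 1, by omega⟩
  obtain ⟨r, rfl⟩ : ∃ r, n = t + 2 + r := ⟨n - (t + 2), by omega⟩
  have hcore := newton_core t r lam
  have hi1 : t + 1 - 1 = t := by omega
  have hi2 : t + 1 + 1 = t + 2 := by omega
  have hi3 : t + 2 + r - (t + 1) = r + 1 := by omega
  simp only [hi1, hi2, hi3]
  push_cast
  calc ((t:ℝ) + 1 + 1) * (((r:ℝ) + 1) + 1) * (esymm (t+2+r) t lam * esymm (t+2+r) (t+2) lam)
      = ((t:ℝ) + 2) * ((r:ℝ) + 2) * (esymm (t+2+r) t lam * esymm (t+2+r) (t+2) lam) := by ring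
    _ ≤ ((t:ℝ) + 1) * ((r:ℝ) + 1) * (esymm (t+2+r) (t+1) lam) ^ 2 := hcore

lemma newton_p (n m : ℕ) (h1 : 1 ≤ m) (h2 : m + 1 ≤ n) (lam : Fin n → ℝ) :
    (esymm n (m-1) lam / (n.choose (m-1) : ℝ)) * (esymm n (m+1) lam / (n.choose (m+1) : ℝ))
      ≤ (esymm n m lam / (n.choose m : ℝ)) ^ 2 := by
  have hc0 : 0 < (n.choose (m-1) : ℝ) := by exact_mod_cast Nat.choose_pos (by omega)
  have hc1 : 0 < (n.choose m : ℝ) := by exact_mod_cast Nat.choose_pos (by omega)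
  have hc2 : 0 < (n.choose (m+1) : ℝ) := by exact_mod_cast Nat.choose_pos (by omega)
  have e1 : (n.choose (m+1) : ℝ) * ((m:ℝ) + 1) = (n.choose m : ℝ) * ((n - m : ℕ) : ℝ) := by
    exact_mod_cast congrArg (Nat.cast : ℕ → ℝ) (Nat.choose_succ_right_eq n m)
  have e2' := Nat.choose_succ_right_eq n (m - 1)
  rw [show m - 1 + 1 = m from by omega, show n - (m-1) = (n - m) + 1 from by omega] at e2'
  have e2 : (n.choose m : ℝ) * (m:ℝ) = (n.choose (m-1) : ℝ) * (((n - m : ℕ) : ℝ) + 1) := by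
    exact_mod_cast congrArg (Nat.cast : ℕ → ℝ) e2'
  have hid : ((m:ℝ) + 1) * (((n - m : ℕ) : ℝ) + 1) * ((n.choose (m-1) : ℝ) * (n.choose (m+1) : ℝ))
      = (m:ℝ) * ((n - m : ℕ) : ℝ) * ((n.choose m : ℝ))^2 := by
    linear_combination ((((n - m : ℕ) : ℝ) + 1) * (n.choose (m-1) : ℝ)) * e1
      - (((n - m : ℕ) : ℝ) * (n.choose m : ℝ)) * e2
  have hs := newton_sigma n m h1 h2 lam
  have hmn : (0:ℝ) < (m:ℝ) * ((n - m : ℕ) : ℝ) := by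
    have : 0 < n - m := by omega
    have : (0:ℝ) < ((n - m : ℕ) : ℝ) := by exact_mod_cast this
    positivity
  rw [div_mul_div_comm, div_pow, div_le_div_iff₀ (by positivity) (by positivity)]
  refine le_of_mul_le_mul_left ?_ hmn
  calc (m:ℝ) * ((n - m : ℕ) : ℝ) * (esymm n (m-1) lam * esymm n (m+1) lam * (n.choose m : ℝ)^2)
      = (((m:ℝ) + 1) * (((n - m : ℕ) : ℝ) + 1) * (esymm n (m-1) lam * esymm n (m+1) lam))
          * ((n.choose (m-1) : ℝ) * (n.choose (m+1) : ℝ)) := by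
        linear_combination (-(esymm n (m-1) lam * esymm n (m+1) lam)) * hid
    _ ≤ ((m:ℝ) * ((n - m : ℕ) : ℝ) * (esymm n m lam)^2)
          * ((n.choose (m-1) : ℝ) * (n.choose (m+1) : ℝ)) := by
        exact mul_le_mul_of_nonneg_right hs (by positivity)
    _ = (m:ℝ) * ((n - m : ℕ) : ℝ) * ((esymm n m lam)^2 * ((n.choose (m-1) : ℝ) * (n.choose (m+1) : ℝ))) := by ring

noncomputable def pq (n : ℕ) (lam : Fin n → ℝ) (m : ℕ) : ℝ := esymm n m lam / (n.choose m : ℝ)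

lemma chain_lemma (n k : ℕ) (hkn : k ≤ n) (lam : Fin n → ℝ)
    (hpos : ∀ j, j ≤ k → 0 < pq n lam j) :
    ∀ b a, a ≤ b → b + 1 ≤ k → pq n lam (b+1) * pq n lam a ≤ pq n lam (a+1) * pq n lam b := by
  intro b
  induction b with
  | zero =>
    intro a ha _
    interval_cases a
    exact le_refl _
  | succ b ih =>
    intro a ha hbk
    rcases Nat.lt_or_ge a (b+1) with hab | hab
    · have ha' : a ≤ b := by omega
      have I := ih a ha' (by omega)
      have N : pq n lam b * pq n lam (b+2) ≤ pq n lam (b+1) ^ 2 := by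
        have := newton_p n (b+1) (by omega) (by omega) lam
        simpa [pq, show b + 1 - 1 = b from by omega, show b + 1 + 1 = b + 2 from by omega]
          using this
      have hpa := hpos a (by omega)
      have hpb := hpos b (by omega)
      have hpa1 := hpos (a+1) (by omega)
      have hpb1 := hpos (b+1) (by omega)
      have hpb2 := hpos (b+2) (by omega)
      have t1 : pq n lam a * (pq n lam b * pq n lam (b+2)) ≤ pq n lam a * pq n lam (b+1)^2 :=
        mul_le_mul_of_nonneg_left N hpa.le
      have t2 : pq n lam (b+1) * (pq n lam (b+1) * pq n lam a)
          ≤ pq n lam (b+1) * (pq n lam (a+1) * pq n lam b) :=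
        mul_le_mul_of_nonneg_left I hpb1.le
      have goal' : pq n lam (b+2) * pq n lam a * pq n lam b
          ≤ pq n lam (a+1) * pq n lam (b+1) * pq n lam b := by nlinarith [t1, t2]
      exact le_of_mul_le_mul_right goal' hpb
    · have : a = b + 1 := by omega
      subst this
      exact le_refl _

lemma pq_pos (n k : ℕ) (hkn : k ≤ n) (lam : Fin n → ℝ)
    (hpos : ∀ j, j ≤ k → 0 < esymm n j lam) :
    ∀ j, j ≤ k → 0 < pq n lam j := by
  intro j hj
  have hc : 0 < (n.choose j : ℝ) := by exact_mod_cast Nat.choose_pos (by omega)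
  exact div_pos (hpos j hj) hc

-- F2 : (pq k / pq (k-1))^d ≤ pq k / pq (k - d) for d ≤ k - l ... general d ≤ k
lemma ratio_pow (n k : ℕ) (hkn : k ≤ n) (hk1 : 1 ≤ k) (lam : Fin n → ℝ)
    (hpos : ∀ j, j ≤ k → 0 < pq n lam j) :
    ∀ d, d ≤ k → (pq n lam k / pq n lam (k-1)) ^ d ≤ pq n lam k / pq n lam (k - d) := by
  intro d
  induction d with
  | zero => intro _; simp [div_self (hpos k le_rfl).ne']
  | succ d ih =>
    intro hd
    have ihd := ih (by omega)
    have hstep : pq n lam k * pq n lam (k - (d+1)) ≤ pq n lam (k - d) * pq n lam (k-1) := by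
      have hc := chain_lemma n k hkn lam hpos (k-1) (k - (d+1)) (by omega) (by omega)
      rw [show k - 1 + 1 = k from by omega, show k - (d+1) + 1 = k - d from by omega] at hc
      exact hc
    have h1 := hpos k le_rfl
    have h2 := hpos (k-1) (by omega)
    have h3 := hpos (k-d) (by omega)
    have h4 := hpos (k-(d+1)) (by omega)
    calc (pq n lam k / pq n lam (k-1)) ^ (d+1)
        = (pq n lam k / pq n lam (k-1)) ^ d * (pq n lam k / pq n lam (k-1)) := by ring
      _ ≤ (pq n lam k / pq n lam (k - d)) * (pq n lam k / pq n lam (k-1)) := by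
          apply mul_le_mul_of_nonneg_right ihd (by positivity)
      _ ≤ pq n lam k / pq n lam (k - (d+1)) := by
          rw [div_mul_div_comm, div_le_div_iff₀ (by positivity) (by positivity)]
          calc pq n lam k * pq n lam k * pq n lam (k - (d+1))
              = (pq n lam k * pq n lam (k - (d+1))) * pq n lam k := by ring
            _ ≤ (pq n lam (k - d) * pq n lam (k-1)) * pq n lam k :=
                mul_le_mul_of_nonneg_right hstep h1.le
            _ = pq n lam k * (pq n lam (k - d) * pq n lam (k-1)) := by ring

lemma esymm_zero_eq_one (n : ℕ) (lam : Fin n → ℝ) : esymm n 0 lam = 1 := by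
  unfold esymm
  simp

lemma esymm_update (n m : ℕ) (lam : Fin n → ℝ) (j : Fin n) :
    esymm n m (Function.update lam j 0)
      = ∑ S ∈ Finset.univ.powersetCard m, if j ∈ S then 0 else ∏ i ∈ S, lam i := by
  unfold esymm
  refine Finset.sum_congr rfl fun S hS => ?_
  by_cases hj : j ∈ S
  · rw [if_pos hj]
    exact Finset.prod_eq_zero hj (by simp)
  · rw [if_neg hj]
    exact Finset.prod_congr rfl fun i hi =>
      Function.update_of_ne (by rintro rfl; exact hj hi) _ _

lemma sum_esymm_update (n m : ℕ) (lam : Fin n → ℝ) :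
    ∑ j, esymm n m (Function.update lam j 0) = ((n - m : ℕ) : ℝ) * esymm n m lam := by
  have h1 : ∀ j, esymm n m (Function.update lam j 0)
      = ∑ S ∈ Finset.univ.powersetCard m, if j ∈ S then 0 else ∏ i ∈ S, lam i :=
    esymm_update n m lam
  rw [Finset.sum_congr rfl fun j _ => h1 j, Finset.sum_comm]
  unfold esymm
  rw [Finset.mul_sum]
  refine Finset.sum_congr rfl fun S hS => ?_
  have hScard : S.card = m := Finset.mem_powersetCard_univ.1 hS
  rw [Finset.sum_ite, Finset.sum_const, Finset.sum_const]
  have hfilter : Finset.univ.filter (fun j => j ∈ S) = S := by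
    ext x; simp
  have hcard2 : (Finset.univ.filter (fun j => ¬ j ∈ S)).card = n - m := by
    have := Finset.card_filter_add_card_filter_not
      (s := (Finset.univ : Finset (Fin n))) (p := fun j => j ∈ S)
    rw [hfilter, hScard] at this
    have hcu : (Finset.univ : Finset (Fin n)).card = n := by simp
    omega
  rw [hcard2]
  simp [nsmul_eq_mul]

lemma sum_Gjj (n k l : ℕ) (hk : 1 ≤ k) (lam : Fin n → ℝ) :
    ∑ j, Gjj n k l lam j
      = (((n - (k-1) : ℕ) : ℝ) * esymm n (k-1) lam * esymm n l lam
          - esymm n k lam * (if l = 0 then 0 else ((n - (l-1) : ℕ) : ℝ) * esymm n (l-1) lam))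
        / (esymm n l lam) ^ 2 := by
  unfold Gjj
  rw [← Finset.sum_div]
  congr 1
  rw [Finset.sum_sub_distrib]
  congr 1
  · rw [← Finset.sum_mul, sum_esymm_update]
  · rw [← Finset.mul_sum]
    congr 1
    unfold esymmPred
    by_cases hl : l = 0
    · simp [hl]
    · simp only [hl, if_false]
      rw [sum_esymm_update]

set_option maxHeartbeats 1000000 in
theorem stmt5 (n k l : ℕ) (hlk : l < k) (hkn : k ≤ n) :
    ∃ c : ℝ, 0 < c ∧
      ∀ lam ∈ GammaK n k,
        (((n : ℝ) - (k : ℝ) + 1) * (1 - (l : ℝ) / (k : ℝ)) *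
            (esymm n (k - 1) lam / esymm n l lam) ≤ ∑ j, Gjj n k l lam j) ∧
        c * (esymm n k lam / esymm n l lam) ^ (1 - 1 / ((k : ℝ) - (l : ℝ)))
          ≤ ((n : ℝ) - (k : ℝ) + 1) * (1 - (l : ℝ) / (k : ℝ)) *
              (esymm n (k - 1) lam / esymm n l lam) := by
  have hk1 : 1 ≤ k := by omega
  obtain ⟨d, hd⟩ : ∃ d, k - l = d + 1 := ⟨k - l - 1, by omega⟩
  set Ck : ℝ := (n.choose k : ℝ) with hCk
  set Ck1 : ℝ := (n.choose (k-1) : ℝ) with hCk1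
  set Clr : ℝ := (n.choose l : ℝ) with hClr
  have hCkpos : 0 < Ck := by rw [hCk]; exact_mod_cast Nat.choose_pos hkn
  have hCk1pos : 0 < Ck1 := by rw [hCk1]; exact_mod_cast Nat.choose_pos (by omega)
  have hClrpos : 0 < Clr := by rw [hClr]; exact_mod_cast Nat.choose_pos (by omega)
  set Cc : ℝ := Ck^d * Clr / Ck1^(d+1) with hCc
  have hCcpos : 0 < Cc := by rw [hCc]; positivity
  set Kr : ℝ := (k : ℝ) - (l : ℝ) with hKr
  have hKrcast : Kr = ((d+1 : ℕ) : ℝ) := by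
    rw [hKr, ← hd]
    rw [Nat.cast_sub (le_of_lt hlk)]
  have hKrpos : 0 < Kr := by rw [hKrcast]; positivity
  set Kc : ℝ := ((n : ℝ) - (k : ℝ) + 1) * (1 - (l : ℝ) / (k : ℝ)) with hKc
  have hkR : (0:ℝ) < (k:ℝ) := by exact_mod_cast hk1
  have hKcpos : 0 < Kc := by
    rw [hKc]
    apply mul_pos
    · have : (k:ℝ) ≤ (n:ℝ) := by exact_mod_cast hkn
      linarith
    · have : (l:ℝ) / (k:ℝ) < 1 := by
        rw [div_lt_one hkR]
        exact_mod_cast hlk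
      linarith
  have hCcR : 0 < Cc ^ (1/Kr) := Real.rpow_pos_of_pos hCcpos _
  refine ⟨Kc / Cc ^ (1/Kr), by positivity, ?_⟩
  intro lam hlam
  have hpos : ∀ j, j ≤ k → 0 < esymm n j lam := by
    intro j hj
    rcases Nat.eq_zero_or_pos j with rfl | hj1
    · rw [esymm_zero_eq_one]; norm_num
    · exact hlam j hj1 hj
  have hpq := pq_pos n k hkn lam hpos
  have hel : 0 < esymm n l lam := hpos l (by omega)
  have hek1 : 0 < esymm n (k-1) lam := hpos (k-1) (by omega)
  have hek : 0 < esymm n k lam := hpos k le_rfl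
  -- choose identities (real)
  have hck : (k:ℝ) * Ck = ((n:ℝ) - k + 1) * Ck1 := by
    have h := Nat.choose_succ_right_eq n (k-1)
    rw [show k - 1 + 1 = k from by omega] at h
    have h2 : ((n.choose k * k : ℕ) : ℝ) = ((n.choose (k-1) * (n - (k-1)) : ℕ) : ℝ) := by
      exact_mod_cast congrArg (Nat.cast : ℕ → ℝ) h
    push_cast at h2
    rw [hCk, hCk1]
    rw [Nat.cast_sub (by omega : k - 1 ≤ n)] at h2
    have : ((k - 1 : ℕ) : ℝ) = (k:ℝ) - 1 := by
      rw [Nat.cast_sub (by omega : 1 ≤ k)]; norm_num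
    rw [this] at h2
    linarith [h2]
  constructor
  · -- FIRST INEQUALITY
    rw [sum_Gjj n k l hk1 lam]
    have hcast1 : ((n - (k-1) : ℕ) : ℝ) = (n:ℝ) - k + 1 := by
      rw [show n - (k-1) = n - k + 1 from by omega]
      push_cast [Nat.cast_sub hkn]
      ring
    rw [hcast1, ← mul_div_assoc]
    rw [div_le_div_iff₀ hel (by positivity)]
    rcases Nat.eq_zero_or_pos l with rfl | hl1
    · -- l = 0 case
      simp only [if_true, eq_self_iff_true, if_pos rfl]
      rw [hKc]
      push_cast
      ring_nf
      nlinarith [hek1, hel, sq_nonneg (esymm n 0 lam)]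
    · -- l ≥ 1
      rw [if_neg (by omega)]
      have hel1 : 0 < esymm n (l-1) lam := hpos (l-1) (by omega)
      have hcast2 : ((n - (l-1) : ℕ) : ℝ) = (n:ℝ) - l + 1 := by
        rw [show n - (l-1) = n - l + 1 from by omega]
        push_cast [Nat.cast_sub (by omega : l ≤ n)]
        ring
      rw [hcast2]
      have hcl : (l:ℝ) * Clr = ((n:ℝ) - l + 1) * (n.choose (l-1) : ℝ) := by
        have h := Nat.choose_succ_right_eq n (l-1)
        rw [show l - 1 + 1 = l from by omega] at h
        have h2 : ((n.choose l * l : ℕ) : ℝ) = ((n.choose (l-1) * (n - (l-1)) : ℕ) : ℝ) := by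
          exact_mod_cast congrArg (Nat.cast : ℕ → ℝ) h
        push_cast at h2
        rw [hClr]
        rw [Nat.cast_sub (by omega : l - 1 ≤ n)] at h2
        have : ((l - 1 : ℕ) : ℝ) = (l:ℝ) - 1 := by
          rw [Nat.cast_sub (by omega : 1 ≤ l)]; norm_num
        rw [this] at h2
        linarith [h2]
      set Cl1 : ℝ := (n.choose (l-1) : ℝ) with hCl1
      have hCl1pos : 0 < Cl1 := by rw [hCl1]; exact_mod_cast Nat.choose_pos (by omega)
      -- F1 sigma
      have I := chain_lemma n k hkn lam hpq (k-1) (l-1) (by omega) (by omega)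
      rw [show k - 1 + 1 = k from by omega, show l - 1 + 1 = l from by omega] at I
      unfold pq at I
      rw [div_mul_div_comm, div_mul_div_comm,
        div_le_div_iff₀ (by positivity) (by positivity)] at I
      -- I : e_k * e_{l-1} * (choose l * choose (k-1)) ≤ e_l * e_{k-1} * (choose k * choose (l-1))
      have F1 : (k:ℝ) * ((n:ℝ) - l + 1) * (esymm n k lam * esymm n (l-1) lam)
          ≤ (l:ℝ) * ((n:ℝ) - k + 1) * (esymm n (k-1) lam * esymm n l lam) := by
        have hnl1 : (0:ℝ) < (n:ℝ) - l + 1 := by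
          have : (l:ℝ) ≤ (n:ℝ) := by exact_mod_cast (by omega : l ≤ n)
          linarith
        refine le_of_mul_le_mul_right ?_ (show (0:ℝ) < Ck1 * Clr by positivity)
        have I' := mul_le_mul_of_nonneg_left I
          (show (0:ℝ) ≤ (k:ℝ) * ((n:ℝ) - l + 1) by positivity)
        calc (k:ℝ) * ((n:ℝ) - l + 1) * (esymm n k lam * esymm n (l-1) lam) * (Ck1 * Clr)
            = (k:ℝ) * ((n:ℝ) - l + 1) * (esymm n k lam * esymm n (l-1) lam * (Clr * Ck1)) := by
              ring
          _ ≤ (k:ℝ) * ((n:ℝ) - l + 1) * (esymm n l lam * esymm n (k-1) lam * (Ck * Cl1)) := I'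
          _ = (l:ℝ) * ((n:ℝ) - k + 1) * (esymm n (k-1) lam * esymm n l lam) * (Ck1 * Clr) := by
              linear_combination (esymm n l lam * esymm n (k-1) lam * ((n:ℝ) - l + 1) * Cl1) * hck
                - (esymm n l lam * esymm n (k-1) lam * ((n:ℝ) - k + 1) * Ck1) * hcl
      -- finish: Kc * e_{k-1} * e_l^2 ≤ (((n-k+1) e_{k-1} e_l) - e_k ((n-l+1) e_{l-1})) * e_l
      have hKck : (k:ℝ) * Kc = ((n:ℝ) - k + 1) * ((k:ℝ) - (l:ℝ)) := by
        rw [hKc]; field_simp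
      have hF1e := mul_le_mul_of_nonneg_right F1 hel.le
      have hKck2 : (k:ℝ) * Kc * (esymm n (k-1) lam * esymm n l lam ^ 2)
          = ((n:ℝ) - k + 1) * ((k:ℝ) - (l:ℝ)) * (esymm n (k-1) lam * esymm n l lam ^ 2) := by
        rw [hKck]
      refine le_of_mul_le_mul_left ?_ hkR
      linarith [hF1e, hKck2]
  · -- SECOND INEQUALITY
    have hA : 0 < esymm n k lam / esymm n l lam := by positivity
    have hB : 0 < esymm n (k-1) lam / esymm n l lam := by positivity
    have hpk := hpq k le_rfl
    have hpk1 := hpq (k-1) (by omega)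
    have hpl := hpq l (by omega)
    have RP := ratio_pow n k hkn hk1 lam hpq (d+1) (by omega)
    rw [show k - (d+1) = l from by omega] at RP
    have step1 : (pq n lam k)^d * pq n lam l ≤ (pq n lam (k-1))^(d+1) := by
      rw [div_pow, div_le_div_iff₀ (by positivity) (by positivity)] at RP
      refine le_of_mul_le_mul_left ?_ hpk
      calc pq n lam k * ((pq n lam k)^d * pq n lam l)
          = (pq n lam k)^(d+1) * pq n lam l := by ring
        _ ≤ pq n lam k * (pq n lam (k-1))^(d+1) := RP
    have H : (esymm n k lam / esymm n l lam)^d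
        ≤ Cc * (esymm n (k-1) lam / esymm n l lam)^(d+1) := by
      unfold pq at step1
      rw [div_pow, div_pow, div_mul_div_comm,
        div_le_div_iff₀ (by positivity) (by positivity)] at step1
      -- step1 : Sk^d * Sl * Ck1^(d+1) ≤ Sk1^(d+1) * (Ck^d * Clr)
      rw [div_pow, div_pow, hCc, div_mul_div_comm,
        div_le_div_iff₀ (by positivity) (by positivity)]
      -- goal : Sk^d * (Ck1^(d+1) * Sl^(d+1)) ≤ Ck^d * Clr * esymm..^(d+1) * Sl^d
      have step2 := mul_le_mul_of_nonneg_right step1 (pow_nonneg hel.le d)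
      calc esymm n k lam ^ d * (Ck1^(d+1) * esymm n l lam ^(d+1))
          = esymm n k lam ^ d * esymm n l lam * Ck1^(d+1) * esymm n l lam ^ d := by ring
        _ ≤ esymm n (k-1) lam ^(d+1) * (Ck^d * Clr) * esymm n l lam ^ d := step2
        _ = Ck^d * Clr * esymm n (k-1) lam ^(d+1) * esymm n l lam ^ d := by ring
    have hexp : 1 - 1/Kr = (d:ℝ) * (1/Kr) := by
      rw [hKrcast]; push_cast; field_simp; ring
    have h1 : (esymm n k lam / esymm n l lam) ^ (1 - 1/Kr)
        = ((esymm n k lam / esymm n l lam)^d : ℝ) ^ (1/Kr) := by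
      rw [hexp, Real.rpow_mul hA.le, Real.rpow_natCast]
    have h2 : ((esymm n k lam / esymm n l lam)^d : ℝ) ^ (1/Kr)
        ≤ (Cc * (esymm n (k-1) lam / esymm n l lam)^(d+1)) ^ (1/Kr) :=
      Real.rpow_le_rpow (by positivity) H (by positivity)
    have h3 : (Cc * (esymm n (k-1) lam / esymm n l lam)^(d+1)) ^ (1/Kr)
        = Cc^(1/Kr) * (esymm n (k-1) lam / esymm n l lam) := by
      rw [Real.mul_rpow hCcpos.le (by positivity)]
      congr 1
      rw [← Real.rpow_natCast (esymm n (k-1) lam / esymm n l lam) (d+1), ← hKrcast,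
        ← Real.rpow_mul hB.le, mul_one_div_cancel hKrpos.ne', Real.rpow_one]
    calc Kc / Cc^(1/Kr) * (esymm n k lam / esymm n l lam) ^ (1 - 1/Kr)
        = Kc / Cc^(1/Kr) * (((esymm n k lam / esymm n l lam)^d : ℝ) ^ (1/Kr)) := by rw [h1]
      _ ≤ Kc / Cc^(1/Kr) * ((Cc * (esymm n (k-1) lam / esymm n l lam)^(d+1)) ^ (1/Kr)) := by
          exact mul_le_mul_of_nonneg_left h2 (by positivity)
      _ = Kc / Cc^(1/Kr) * (Cc^(1/Kr) * (esymm n (k-1) lam / esymm n l lam)) := by rw [h3]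
      _ = Kc * (esymm n (k-1) lam / esymm n l lam) := by
          rw [← mul_assoc, div_mul_cancel₀ _ hCcR.ne']
end
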